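/- arXiv:1210.7710 — 9 statements merged into one kernel-verified Lean document; each statement's English description precedes it below -/
import Mathlib

section
/- The stabilizer of a full-rank matrix product state parameter under the gauge group action consists exactly of the scalar transformations: if A is full rank and G = (G(0),…,G(N)) is a gauge transformation (G(n) invertible D_n×D_n, G(0) = G(N)) such that A^{[G]} = A, then there exists a nonzero complex number c with G(n) = c·1_{D_n} for every n = 0,…,N. -/
open Matrix
open scoped ComplexOrder

noncomputable section

namespace MPS

variable {N : ℕ} {q : Fin N → ℕ} {D : ℕ → ℕ}

/-- The left virtual density matrices: `l 0 = 1`,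
`l (n+1) = Σ_s A^s(n)† l(n) A^s(n)`. -/
def lMat (A : (n : Fin N) → Fin (q n) → Matrix (Fin (D n.val)) (Fin (D (n.val + 1))) ℂ) :
    (k : ℕ) → k ≤ N → Matrix (Fin (D k)) (Fin (D k)) ℂ
  | 0, _ => 1
  | k + 1, h => ∑ s : Fin (q ⟨k, h⟩),
      (A ⟨k, h⟩ s)ᴴ * lMat A k (Nat.le_of_succ_le h) * A ⟨k, h⟩ s

/-- Auxiliary downward recursion for the right virtual density matrices:
`rAux j = r (N - j)`. -/
def rAux (A : (n : Fin N) → Fin (q n) → Matrix (Fin (D n.val)) (Fin (D (n.val + 1))) ℂ) :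
    (j : ℕ) → j ≤ N → Matrix (Fin (D (N - j))) (Fin (D (N - j))) ℂ
  | 0, _ => 1
  | j + 1, h => ∑ s : Fin (q ⟨N - (j + 1), by omega⟩),
      A ⟨N - (j + 1), by omega⟩ s *
        ((rAux A j (Nat.le_of_succ_le h)).submatrix
          (Fin.cast (congrArg D (by omega : N - (j + 1) + 1 = N - j)))
          (Fin.cast (congrArg D (by omega : N - (j + 1) + 1 = N - j)))) *
      (A ⟨N - (j + 1), by omega⟩ s)ᴴ

/-- The right virtual density matrices: `r N = 1`,
`r (n-1) = Σ_s A^s(n) r(n) A^s(n)†`. -/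
def rMat (A : (n : Fin N) → Fin (q n) → Matrix (Fin (D n.val)) (Fin (D (n.val + 1))) ℂ)
    (n : ℕ) (h : n ≤ N) : Matrix (Fin (D n)) (Fin (D n)) ℂ :=
  (rAux A (N - n) (Nat.sub_le N n)).submatrix
    (Fin.cast (congrArg D (by omega : n = N - (N - n))))
    (Fin.cast (congrArg D (by omega : n = N - (N - n))))

/-- An MPS parameter is full rank if all its virtual density matrices are positive
definite. -/
def FullRank (A : (n : Fin N) → Fin (q n) → Matrix (Fin (D n.val)) (Fin (D (n.val + 1))) ℂ) :
    Prop :=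
  ∀ (k : ℕ) (h : k ≤ N), (lMat A k h).PosDef ∧ (rMat A k h).PosDef

end MPS

/-- **The stabilizer of a full-rank MPS parameter consists exactly of scalar gauge
transformations:** if `A` is full rank and `G` is a gauge transformation (each `G n`
invertible, `G 0 = G N`) with `A^{[G]} = A`, then there is a nonzero `c : ℂ` with
`G n = c • 1` for every `n = 0, …, N`. -/
theorem mps_stabilizer_eq_scalars (N : ℕ) (q : Fin N → ℕ) (D : ℕ → ℕ)
    (h0 : D 0 = 1) (hN : D N = 1)
    (A : (n : Fin N) → Fin (q n) → Matrix (Fin (D n.val)) (Fin (D (n.val + 1))) ℂ)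
    (hA : MPS.FullRank A)
    (G : (n : ℕ) → Matrix (Fin (D n)) (Fin (D n)) ℂ)
    (hG : ∀ n, n ≤ N → IsUnit (G n))
    (hbc : G N = (G 0).submatrix (Fin.cast (hN.trans h0.symm)) (Fin.cast (hN.trans h0.symm)))
    (hfix : ∀ (n : Fin N) (s : Fin (q n)), (G n.val)⁻¹ * A n s * G (n.val + 1) = A n s) :
    ∃ c : ℂ, c ≠ 0 ∧ ∀ n, n ≤ N → G n = c • (1 : Matrix (Fin (D n)) (Fin (D n)) ℂ) := by

  -- The unique index of `Fin (D 0)` and the scalar `c`.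
  have hsub : ∀ i j : Fin (D 0), i = j := fun i j => Fin.ext (by omega)
  haveI : Subsingleton (Fin (D 0)) := ⟨hsub⟩
  set i0 : Fin (D 0) := ⟨0, by omega⟩ with hi0
  set c : ℂ := G 0 i0 i0 with hc
  have hG0 : G 0 = c • 1 := by
    ext i j
    rw [hsub i i0, hsub j i0]
    simp [Matrix.one_apply_eq]
    exact hc.symm
  have hcne : c ≠ 0 := by
    have hu : IsUnit (G 0).det := (Matrix.isUnit_iff_isUnit_det _).mp (hG 0 (Nat.zero_le N))
    have hdet : (G 0).det = c := Matrix.det_eq_elem_of_subsingleton _ i0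
    rw [hdet] at hu
    exact hu.ne_zero
  refine ⟨c, hcne, ?_⟩
  intro n
  induction n with
  | zero => intro _; exact hG0
  | succ n ih =>
    intro h
    have hn : n ≤ N := by omega
    have hGn := ih hn
    -- A^s(n) annihilates M := G(n+1) - c•1
    have hAM : ∀ s : Fin (q ⟨n, h⟩),
        A ⟨n, h⟩ s * (G (n + 1) - c • 1) = 0 := by
      intro s
      have hfx := hfix ⟨n, h⟩ s
      have hunit : IsUnit (G n).det := (Matrix.isUnit_iff_isUnit_det _).mp (hG n hn)
      have h1 : A ⟨n, h⟩ s * G (n + 1) = G n * A ⟨n, h⟩ s := by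
        calc A ⟨n, h⟩ s * G (n + 1)
            = (G n * (G n)⁻¹) * (A ⟨n, h⟩ s * G (n + 1)) := by
              rw [Matrix.mul_nonsing_inv _ hunit, Matrix.one_mul]
          _ = G n * ((G n)⁻¹ * A ⟨n, h⟩ s * G (n + 1)) := by
              simp only [Matrix.mul_assoc]
          _ = G n * A ⟨n, h⟩ s := by rw [hfx]
      rw [Matrix.mul_sub, h1, hGn]
      simp [Matrix.smul_mul, Matrix.mul_smul]
    set M : Matrix (Fin (D (n + 1))) (Fin (D (n + 1))) ℂ := G (n + 1) - c • 1 with hM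
    have hl := (hA (n + 1) h).1
    have hdef : MPS.lMat A (n + 1) h =
        ∑ s : Fin (q ⟨n, h⟩),
          (A ⟨n, h⟩ s)ᴴ * MPS.lMat A n hn * A ⟨n, h⟩ s := rfl
    have hMlM : Mᴴ * MPS.lMat A (n + 1) h * M = 0 := by
      rw [hdef, Matrix.mul_sum, Matrix.sum_mul]
      apply Finset.sum_eq_zero
      intro s _
      calc Mᴴ * ((A ⟨n, h⟩ s)ᴴ * MPS.lMat A n hn * A ⟨n, h⟩ s) * M
          = (A ⟨n, h⟩ s * M)ᴴ * MPS.lMat A n hn * (A ⟨n, h⟩ s * M) := by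
            rw [Matrix.conjTranspose_mul]
            simp only [Matrix.mul_assoc]
        _ = 0 := by rw [hAM s]; simp
    have hM0 : M = 0 := by
      ext i j
      set v : Fin (D (n + 1)) → ℂ := fun k => M k j with hv
      have hvd : star v ⬝ᵥ (MPS.lMat A (n + 1) h) *ᵥ v
          = (Mᴴ * MPS.lMat A (n + 1) h * M) j j := by
        simp only [dotProduct, Matrix.mulVec, Matrix.mul_apply,
          Matrix.conjTranspose_apply, Pi.star_apply, hv, dotProduct,
          Finset.sum_mul, Finset.mul_sum]
        rw [Finset.sum_comm]
        apply Finset.sum_congr rfl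
        intro a _
        apply Finset.sum_congr rfl
        intro b _
        ring
      have hv0 : v = 0 := by
        by_contra hvne
        have hpos := hl.dotProduct_mulVec_pos hvne
        rw [hvd, hMlM] at hpos
        simp at hpos
      have := congrFun hv0 i
      simpa using this
    have : G (n + 1) = c • 1 := by
      have := sub_eq_zero.mp hM0
      simpa using this
    exact this
end
end

section
/- A full-rank matrix product state with open boundary conditions determines its parameters uniquely up to gauge: if A and A' are full-rank MPS parameters with the same local and bond dimensions and Ψ[A] = Ψ[A'], then there exist invertible complex D_n×D_n matrices G(n) for n = 1,…,N−1 such that, setting G(0) = G(N) = 1, one has (A')^s(n) = G(n−1)^{-1} A^s(n) G(n) for all n = 1,…,N and all s = 1,…,q_n. -/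
open Matrix
open scoped ComplexOrder

noncomputable section

namespace MPS

variable {N : ℕ} {q : Fin N → ℕ} {D : ℕ → ℕ}

/-- The partial ordered product `A^{s_0}(0) ⋯ A^{s_{k-1}}(k-1)`. -/
def prodAux (A : (n : Fin N) → Fin (q n) → Matrix (Fin (D n.val)) (Fin (D (n.val + 1))) ℂ)
    (s : (n : Fin N) → Fin (q n)) : (k : ℕ) → k ≤ N → Matrix (Fin (D 0)) (Fin (D k)) ℂ
  | 0, _ => 1
  | k + 1, h => prodAux A s k (Nat.le_of_succ_le h) * A ⟨k, h⟩ (s ⟨k, h⟩)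

/-- The matrix product state `Ψ[A]`, as the family of its coefficients
`tr[A^{s_1}(1) ⋯ A^{s_N}(N)]`. -/
def psi (hD : D N = D 0)
    (A : (n : Fin N) → Fin (q n) → Matrix (Fin (D n.val)) (Fin (D (n.val + 1))) ℂ) :
    ((n : Fin N) → Fin (q n)) → ℂ :=
  fun s => Matrix.trace ((prodAux A s N le_rfl).submatrix id (Fin.cast hD.symm))

end MPS

namespace MPS

variable {N : ℕ} {q : Fin N → ℕ} {D : ℕ → ℕ}

abbrev Param (N : ℕ) (q : Fin N → ℕ) (D : ℕ → ℕ) :=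
  (n : Fin N) → Fin (q n) → Matrix (Fin (D n.val)) (Fin (D (n.val + 1))) ℂ

def qprod (A : Param N q D) (s : (n : Fin N) → Fin (q n)) :
    (k : ℕ) → k ≤ N → Matrix (Fin (D k)) (Fin (D N)) ℂ := fun k h =>
  if hk : k < N then A ⟨k, hk⟩ (s ⟨k, hk⟩) * qprod A s (k + 1) hk
  else (1 : Matrix (Fin (D N)) (Fin (D N)) ℂ).submatrix
    (Fin.cast (congrArg D (Nat.le_antisymm h (Nat.not_lt.mp hk)))) id
termination_by k => N - k

def rP (A : Param N q D) : (k : ℕ) → k ≤ N → Matrix (Fin (D k)) (Fin (D k)) ℂ := fun k h =>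
  if hk : k < N then
    ∑ s : Fin (q ⟨k, hk⟩), A ⟨k, hk⟩ s * rP A (k + 1) hk * (A ⟨k, hk⟩ s)ᴴ
  else 1
termination_by k => N - k

lemma fin_cast_rfl {a : ℕ} (e : a = a) : Fin.cast e = (id : Fin a → Fin a) :=
  funext fun i => Fin.ext (by simp)

lemma rP_cast (A : Param N q D) {k k' : ℕ} (e : k = k') (h : k ≤ N) (h' : k' ≤ N) :
    rP A k h = (rP A k' h').submatrix (Fin.cast (congrArg D e)) (Fin.cast (congrArg D e)) := by
  subst e
  rw [fin_cast_rfl, Matrix.submatrix_id_id]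

lemma rAux_eq (A : Param N q D) (j : ℕ) (h : j ≤ N) :
    rAux A j h = rP A (N - j) (Nat.sub_le N j) := by
  induction j with
  | zero => rw [rAux, rP, dif_neg (by omega : ¬ N - 0 < N)]
  | succ j ih =>
    rw [rAux, rP, dif_pos (by omega : N - (j+1) < N)]
    apply Finset.sum_congr rfl
    intro s _
    congr 1
    congr 1
    rw [ih (Nat.le_of_succ_le h)]
    exact (rP_cast A (by omega : N - (j+1) + 1 = N - j) (by omega) (by omega)).symm

lemma rMat_eq (A : Param N q D) (k : ℕ) (h : k ≤ N) : rMat A k h = rP A k h := by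
  rw [rMat, rAux_eq]
  exact (rP_cast A (by omega : k = N - (N - k)) h (Nat.sub_le N (N - k))).symm


lemma prodAux_congr (A : Param N q D) {s s' : (n : Fin N) → Fin (q n)} (k : ℕ) (h : k ≤ N)
    (hss : ∀ n : Fin N, n.val < k → s n = s' n) :
    prodAux A s k h = prodAux A s' k h := by
  induction k with
  | zero => rfl
  | succ k ih =>
    show prodAux A s k _ * A ⟨k, h⟩ (s ⟨k, h⟩) = prodAux A s' k _ * A ⟨k, h⟩ (s' ⟨k, h⟩)
    rw [ih (Nat.le_of_succ_le h) (fun n hn => hss n (by omega)),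
      hss ⟨k, h⟩ (by simp)]

lemma qprod_congr (A : Param N q D) {s s' : (n : Fin N) → Fin (q n)} (k : ℕ) (h : k ≤ N)
    (hss : ∀ n : Fin N, k ≤ n.val → s n = s' n) :
    qprod A s k h = qprod A s' k h := by
  rw [qprod, qprod]
  split_ifs with hk
  · rw [hss ⟨k, hk⟩ le_rfl, qprod_congr A (k+1) hk (fun n hn => hss n (by omega))]
  · rfl
termination_by N - k

lemma prodAux_mul_qprod (A : Param N q D) (s : (n : Fin N) → Fin (q n)) (k : ℕ) (h : k ≤ N) :
    prodAux A s k h * qprod A s k h = prodAux A s N le_rfl := by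
  rw [qprod]
  split_ifs with hk
  · rw [← Matrix.mul_assoc]
    exact prodAux_mul_qprod A s (k+1) hk
  · have e : k = N := Nat.le_antisymm h (Nat.not_lt.mp hk)
    subst e
    rw [fin_cast_rfl, Matrix.submatrix_id_id, Matrix.mul_one]
termination_by N - k


lemma sum_mulVec {m n ι : Type*} [Fintype n] (S : Finset ι) (f : ι → Matrix m n ℂ)
    (v : n → ℂ) : (∑ i ∈ S, f i) *ᵥ v = ∑ i ∈ S, f i *ᵥ v := by
  ext j
  simp [Matrix.mulVec, dotProduct, Matrix.sum_apply, Finset.sum_mul]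
  rw [Finset.sum_comm]

lemma dotProduct_sum {n ι : Type*} [Fintype n] (S : Finset ι) (v : n → ℂ)
    (f : ι → n → ℂ) : v ⬝ᵥ (∑ i ∈ S, f i) = ∑ i ∈ S, v ⬝ᵥ f i := by
  simp [dotProduct, Finset.sum_apply, Finset.mul_sum]
  rw [Finset.sum_comm]

lemma span_left (A : Param N q D) (hq : ∀ n : Fin N, 0 < q n)
    (hA : ∀ (k : ℕ) (h : k ≤ N), (lMat A k h).PosDef) :
    ∀ (k : ℕ) (h : k ≤ N) (v : Fin (D k) → ℂ),
      (∀ s : (n : Fin N) → Fin (q n), prodAux A s k h *ᵥ v = 0) → v = 0 := by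
  intro k
  induction k with
  | zero =>
    intro h v hv
    have := hv (fun n => ⟨0, hq n⟩)
    rwa [show prodAux A (fun n => ⟨0, hq n⟩) 0 h = 1 from rfl, Matrix.one_mulVec] at this
  | succ k ih =>
    intro h v hv
    have hAt : ∀ t : Fin (q ⟨k, h⟩), A ⟨k, h⟩ t *ᵥ v = 0 := by
      intro t
      apply ih (Nat.le_of_succ_le h)
      intro s
      have h2 := hv (Function.update s ⟨k, h⟩ t)
      have e2 : prodAux A (Function.update s ⟨k, h⟩ t) (k+1) h
          = prodAux A s k (Nat.le_of_succ_le h) * A ⟨k, h⟩ t := by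
        show prodAux A (Function.update s ⟨k, h⟩ t) k _ *
            A ⟨k, h⟩ ((Function.update s ⟨k, h⟩ t) ⟨k, h⟩) = _
        rw [Function.update_self,
          prodAux_congr A k (Nat.le_of_succ_le h)
            (fun n hn => Function.update_of_ne
              (fun hc => absurd (congrArg Fin.val hc) (by simp; omega)) t s)]
      rw [e2, ← Matrix.mulVec_mulVec] at h2
      exact h2
    have hl : lMat A (k+1) h *ᵥ v = 0 := by
      show (∑ t : Fin (q ⟨k, h⟩), (A ⟨k, h⟩ t)ᴴ * lMat A k _ * A ⟨k, h⟩ t) *ᵥ v = 0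
      rw [sum_mulVec]
      apply Finset.sum_eq_zero
      intro t _
      rw [← Matrix.mulVec_mulVec, ← Matrix.mulVec_mulVec, hAt t, Matrix.mulVec_zero,
        Matrix.mulVec_zero]
    by_contra hv0
    have := (hA (k+1) h).dotProduct_mulVec_pos hv0
    rw [hl, dotProduct_zero] at this
    exact lt_irrefl 0 this

lemma span_right (A : Param N q D) (hq : ∀ n : Fin N, 0 < q n)
    (hA : ∀ (k : ℕ) (h : k ≤ N), (rP A k h).PosDef) :
    ∀ (k : ℕ) (h : k ≤ N) (v : Fin (D k) → ℂ),
      (∀ s : (n : Fin N) → Fin (q n), v ᵥ* qprod A s k h = 0) → v = 0 := by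
  intro k h v hv
  by_cases hk : k < N
  · have hAt : ∀ t : Fin (q ⟨k, hk⟩), v ᵥ* A ⟨k, hk⟩ t = 0 := by
      intro t
      apply span_right A hq hA (k+1) hk
      intro s
      have h2 := hv (Function.update s ⟨k, hk⟩ t)
      rw [qprod, dif_pos hk, Function.update_self,
        qprod_congr A (k+1) hk
          (fun n hn => Function.update_of_ne
            (fun hc => absurd (congrArg Fin.val hc) (by simp; omega)) t s),
        ← Matrix.vecMul_vecMul] at h2
      exact h2
    have hr : v ⬝ᵥ (rP A k h *ᵥ star v) = 0 := by
      rw [rP, dif_pos hk, sum_mulVec, dotProduct_sum]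
      apply Finset.sum_eq_zero
      intro t _
      rw [Matrix.dotProduct_mulVec, ← Matrix.vecMul_vecMul, ← Matrix.vecMul_vecMul,
        hAt t, Matrix.zero_vecMul, Matrix.zero_vecMul, zero_dotProduct]
    by_contra hv0
    have hsv : star v ≠ 0 := fun hc => hv0 (by simpa using congrArg star hc)
    have hpos := (hA k h).dotProduct_mulVec_pos hsv
    rw [show star (star v) = v from star_star v, hr] at hpos
    exact lt_irrefl 0 hpos
  · have e : k = N := Nat.le_antisymm h (Nat.not_lt.mp hk)
    subst e
    have h2 := hv (fun n => ⟨0, hq n⟩)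
    rw [qprod, dif_neg hk, fin_cast_rfl, Matrix.submatrix_id_id, Matrix.vecMul_one] at h2
    exact h2
termination_by k => N - k

lemma posdef_zero_dim {d : ℕ} (h : (0 : Matrix (Fin d) (Fin d) ℂ).PosDef) : d = 0 := by
  by_contra hd
  have h1 : (fun _ => (1:ℂ) : Fin d → ℂ) ≠ 0 := by
    intro hc
    have := congrFun hc ⟨0, Nat.pos_of_ne_zero hd⟩
    simpa using this
  have h2 := h.dotProduct_mulVec_pos h1
  rw [Matrix.zero_mulVec, dotProduct_zero] at h2
  exact lt_irrefl 0 h2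

lemma q_pos (A : Param N q D) (hA : FullRank A) (hN : D N = 1) : ∀ n : Fin N, 0 < q n := by
  intro n
  by_contra hq0'
  have hq0 : q n = 0 := by omega
  have key : ∀ m, n.val + 1 ≤ m → m ≤ N → D m = 0 := by
    intro m hm
    induction m, hm using Nat.le_induction with
    | base =>
      intro hm1
      have hl : lMat A (n.val + 1) hm1 = 0 := by
        show (∑ s : Fin (q ⟨n.val, hm1⟩), (A ⟨n.val, hm1⟩ s)ᴴ *
            lMat A n.val (Nat.le_of_succ_le hm1) * A ⟨n.val, hm1⟩ s) = 0
        haveI : IsEmpty (Fin (q ⟨n.val, hm1⟩)) := by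
          rw [Fin.eta n hm1, hq0]
          infer_instance
        rw [Finset.univ_eq_empty, Finset.sum_empty]
      exact posdef_zero_dim (hl ▸ (hA _ hm1).1)
    | succ m hm ih =>
      intro hm1
      have hD : D m = 0 := ih (Nat.le_of_succ_le hm1)
      have hl : lMat A (m + 1) hm1 = 0 := by
        show (∑ s : Fin (q ⟨m, hm1⟩), (A ⟨m, hm1⟩ s)ᴴ *
            lMat A m (Nat.le_of_succ_le hm1) * A ⟨m, hm1⟩ s) = 0
        apply Finset.sum_eq_zero
        intro t _
        ext i j
        rw [Matrix.mul_apply]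
        haveI : IsEmpty (Fin (D m)) := by rw [hD]; infer_instance
        rw [Finset.univ_eq_empty, Finset.sum_empty, Matrix.zero_apply]
      exact posdef_zero_dim (hl ▸ (hA _ hm1).1)
  have := key N (by omega) le_rfl
  omega

lemma coeff_eq (h0 : D 0 = 1) (hN : D N = 1) (A A' : Param N q D)
    (hpsi : psi (hN.trans h0.symm) A = psi (hN.trans h0.symm) A')
    (s : (n : Fin N) → Fin (q n)) :
    prodAux A s N le_rfl = prodAux A' s N le_rfl := by
  have hs := congrFun hpsi s
  unfold psi at hs
  set c : Fin (D 0) → Fin (D N) := Fin.cast (hN.trans h0.symm).symm with hc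
  ext i j
  have hj : j = c i := by
    apply Fin.ext
    have h1 := i.isLt
    have h2 := j.isLt
    simp only [hc, Fin.coe_cast]
    omega
  have tr : ∀ M : Matrix (Fin (D 0)) (Fin (D N)) ℂ,
      Matrix.trace (M.submatrix id c) = M i (c i) := by
    intro M
    rw [Matrix.trace]
    have : ∀ b : Fin (D 0), b = i := by
      intro b
      apply Fin.ext
      have h1 := i.isLt
      have h2 := b.isLt
      omega
    rw [Finset.sum_eq_single_of_mem i (Finset.mem_univ i)
      (fun b _ hb => absurd (this b) hb)]
    rfl
  rw [hj, ← tr (prodAux A s N le_rfl), ← tr (prodAux A' s N le_rfl)]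
  exact hs

lemma pairing (h0 : D 0 = 1) (hN : D N = 1) (A A' : Param N q D)
    (hpsi : psi (hN.trans h0.symm) A = psi (hN.trans h0.symm) A')
    (k : ℕ) (h : k ≤ N) (s t : (n : Fin N) → Fin (q n)) :
    prodAux A s k h * qprod A t k h = prodAux A' s k h * qprod A' t k h := by
  set u : (n : Fin N) → Fin (q n) := fun n => if n.val < k then s n else t n with hu
  have hsu : ∀ B : Param N q D, prodAux B u k h = prodAux B s k h := fun B =>
    prodAux_congr B k h (fun n hn => by simp only [hu]; rw [if_pos hn])
  have htu : ∀ B : Param N q D, qprod B u k h = qprod B t k h := fun B =>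
    qprod_congr B k h (fun n hn => by simp only [hu]; rw [if_neg (by omega)])
  rw [← hsu A, ← htu A, ← hsu A', ← htu A', prodAux_mul_qprod, prodAux_mul_qprod]
  exact coeff_eq h0 hN A A' hpsi u

def bigL (A B : Param N q D) (k : ℕ) (h : k ≤ N) : Matrix (Fin (D k)) (Fin (D k)) ℂ :=
  ∑ s : ((n : Fin N) → Fin (q n)), (prodAux A s k h)ᴴ * prodAux B s k h

lemma bigL_isUnit (A : Param N q D) (hq : ∀ n : Fin N, 0 < q n) (hA : FullRank A)
    (k : ℕ) (h : k ≤ N) : IsUnit (bigL A A k h) := by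
  rw [Matrix.isUnit_iff_isUnit_det, isUnit_iff_ne_zero]
  intro hdet
  obtain ⟨v, hv0, hv⟩ := (Matrix.exists_mulVec_eq_zero_iff).mpr hdet
  apply hv0
  apply span_left A hq (fun k h => (hA k h).1) k h
  intro s
  have key : star v ⬝ᵥ (bigL A A k h *ᵥ v) = 0 := by rw [hv, dotProduct_zero]
  rw [bigL, sum_mulVec, dotProduct_sum] at key
  have hterm : ∀ s' : (n : Fin N) → Fin (q n),
      star v ⬝ᵥ (((prodAux A s' k h)ᴴ * prodAux A s' k h) *ᵥ v)
        = star (prodAux A s' k h *ᵥ v) ⬝ᵥ (prodAux A s' k h *ᵥ v) := by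
    intro s'
    rw [← Matrix.mulVec_mulVec, Matrix.dotProduct_mulVec (star v), ← Matrix.star_mulVec]
  have hz := (Finset.sum_eq_zero_iff_of_nonneg (fun s' _ => by
    rw [hterm s']
    exact dotProduct_star_self_nonneg _)).mp key s (Finset.mem_univ s)
  rw [hterm s] at hz
  exact dotProduct_star_self_eq_zero.mp hz

lemma row_vecMul {m n p : Type*} [Fintype n] (W : Matrix m n ℂ) (Q : Matrix n p ℂ) (i : m) :
    (fun x => W i x) ᵥ* Q = fun j => (W * Q) i j := by
  ext j
  simp [Matrix.vecMul, Matrix.mul_apply, dotProduct]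

lemma col_mulVec {m n p : Type*} [Fintype n] (M : Matrix m n ℂ) (X : Matrix n p ℂ) (j : p) :
    M *ᵥ (fun r => X r j) = fun i => (M * X) i j := by
  ext i
  simp [Matrix.mulVec, Matrix.mul_apply, dotProduct]

def GG (A A' : Param N q D) (k : ℕ) (h : k ≤ N) : Matrix (Fin (D k)) (Fin (D k)) ℂ :=
  (bigL A A k h)⁻¹ * bigL A A' k h

section Main

variable (h0 : D 0 = 1) (hN : D N = 1) (A A' : Param N q D)
  (hA : FullRank A) (hA' : FullRank A')
  (hpsi : psi (hN.trans h0.symm) A = psi (hN.trans h0.symm) A')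

include h0 hN hA hA' hpsi

lemma GG_mul_qprod (k : ℕ) (h : k ≤ N) (t : (n : Fin N) → Fin (q n)) :
    GG A A' k h * qprod A' t k h = qprod A t k h := by
  have hq := q_pos A hA hN
  have hb : bigL A A' k h * qprod A' t k h = bigL A A k h * qprod A t k h := by
    rw [bigL, bigL, Matrix.sum_mul, Matrix.sum_mul]
    apply Finset.sum_congr rfl
    intro s _
    rw [Matrix.mul_assoc, Matrix.mul_assoc, pairing h0 hN A A' hpsi k h s t]
  rw [GG, Matrix.mul_assoc, hb, ← Matrix.mul_assoc,
    Matrix.nonsing_inv_mul _ ((Matrix.isUnit_iff_isUnit_det _).mp (bigL_isUnit A hq hA k h)),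
    Matrix.one_mul]

lemma prod_mul_GG (k : ℕ) (h : k ≤ N) (s : (n : Fin N) → Fin (q n)) :
    prodAux A s k h * GG A A' k h = prodAux A' s k h := by
  have hq := q_pos A hA hN
  have hW : prodAux A' s k h - prodAux A s k h * GG A A' k h = 0 := by
    have hrow : ∀ t, (prodAux A' s k h - prodAux A s k h * GG A A' k h) * qprod A' t k h
        = 0 := by
      intro t
      rw [Matrix.sub_mul, Matrix.mul_assoc, GG_mul_qprod h0 hN A A' hA hA' hpsi k h t,
        ← pairing h0 hN A A' hpsi k h s t, sub_self]
    ext i j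
    have := span_right A' hq (fun k' h' => rMat_eq A' k' h' ▸ (hA' k' h').2) k h
      (fun x => (prodAux A' s k h - prodAux A s k h * GG A A' k h) i x)
      (fun t => by rw [row_vecMul, hrow t]; ext j'; simp)
    exact congrFun this j
  exact (sub_eq_zero.mp hW).symm

lemma GG_mul_GG (k : ℕ) (h : k ≤ N) :
    GG A A' k h * GG A' A k h = 1 := by
  have hq := q_pos A hA hN
  have h1 : ∀ s, prodAux A s k h * (GG A A' k h * GG A' A k h - 1) = 0 := by
    intro s
    rw [Matrix.mul_sub, Matrix.mul_one, ← Matrix.mul_assoc,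
      prod_mul_GG h0 hN A A' hA hA' hpsi k h s,
      prod_mul_GG h0 hN A' A hA' hA hpsi.symm k h s, sub_self]
  have hZ : GG A A' k h * GG A' A k h - 1 = 0 := by
    ext i j
    have := span_left A hq (fun k' h' => (hA k' h').1) k h
      (fun r => (GG A A' k h * GG A' A k h - 1) r j)
      (fun s => by rw [col_mulVec, h1 s]; ext i'; simp)
    exact congrFun this i
  rw [← sub_eq_zero]
  exact hZ

lemma GG_isUnit (k : ℕ) (h : k ≤ N) : IsUnit (GG A A' k h) := by
  have h1 := GG_mul_GG h0 hN A A' hA hA' hpsi k h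
  exact ⟨⟨GG A A' k h, GG A' A k h, h1, mul_eq_one_comm.mp h1⟩, rfl⟩

lemma GG_zero : GG A A' 0 (Nat.zero_le N) = 1 := by
  have hq := q_pos A hA hN
  have := prod_mul_GG h0 hN A A' hA hA' hpsi 0 (Nat.zero_le N) (fun n => ⟨0, hq n⟩)
  rwa [show prodAux A (fun n => ⟨0, hq n⟩) 0 (Nat.zero_le N) = 1 from rfl,
    show prodAux A' (fun n => ⟨0, hq n⟩) 0 (Nat.zero_le N) = 1 from rfl,
    Matrix.one_mul] at this

lemma GG_last : GG A A' N le_rfl = 1 := by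
  have hq := q_pos A hA hN
  have hbase : ∀ B : Param N q D, qprod B (fun n => ⟨0, hq n⟩) N le_rfl = 1 := fun B => by
    rw [qprod, dif_neg (lt_irrefl N), fin_cast_rfl, Matrix.submatrix_id_id]
  have := GG_mul_qprod h0 hN A A' hA hA' hpsi N le_rfl (fun n => ⟨0, hq n⟩)
  rwa [hbase, hbase, Matrix.mul_one] at this

lemma GG_site (n : Fin N) (s : Fin (q n)) :
    GG A A' n.val (Nat.le_of_lt n.isLt) * A' n s
      = A n s * GG A A' (n.val + 1) n.isLt := by
  have hq := q_pos A hA hN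
  have hle : n.val ≤ N := Nat.le_of_lt n.isLt
  have key : ∀ u : (m : Fin N) → Fin (q m),
      prodAux A u n.val hle *
        (GG A A' n.val hle * A' n s - A n s * GG A A' (n.val + 1) n.isLt) = 0 := by
    intro u
    set u' := Function.update u n s with hu'
    have e1 : prodAux A u' n.val hle = prodAux A u n.val hle :=
      prodAux_congr A n.val hle (fun m hm => Function.update_of_ne
        (fun hc => absurd (congrArg Fin.val hc) (by omega)) s u)
    have e1' : prodAux A' u' n.val hle = prodAux A' u n.val hle :=
      prodAux_congr A' n.val hle (fun m hm => Function.update_of_ne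
        (fun hc => absurd (congrArg Fin.val hc) (by omega)) s u)
    have d1 : prodAux A u' (n.val + 1) n.isLt = prodAux A u n.val hle * A n s := by
      show prodAux A u' n.val hle * A n (u' n) = _
      rw [hu', Function.update_self, e1]
    have d1' : prodAux A' u' (n.val + 1) n.isLt = prodAux A' u n.val hle * A' n s := by
      show prodAux A' u' n.val hle * A' n (u' n) = _
      rw [hu', Function.update_self, e1']
    rw [Matrix.mul_sub, ← Matrix.mul_assoc, ← Matrix.mul_assoc,
      prod_mul_GG h0 hN A A' hA hA' hpsi n.val hle u]
    rw [show prodAux A' u n.val hle * A' n s = prodAux A' u' (n.val + 1) n.isLt from d1'.symm,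
      show prodAux A u n.val hle * A n s = prodAux A u' (n.val + 1) n.isLt from d1.symm,
      prod_mul_GG h0 hN A A' hA hA' hpsi (n.val + 1) n.isLt u', sub_self]
  have hZ : GG A A' n.val hle * A' n s - A n s * GG A A' (n.val + 1) n.isLt = 0 := by
    ext i j
    have := span_left A hq (fun k' h' => (hA k' h').1) n.val hle
      (fun r => (GG A A' n.val hle * A' n s - A n s * GG A A' (n.val + 1) n.isLt) r j)
      (fun u => by rw [col_mulVec, key u]; ext i'; simp)
    exact congrFun this i
  rw [← sub_eq_zero]
  exact hZ

end Main

end MPS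

/-- **A full-rank MPS with open boundary conditions determines its parameters uniquely up
to gauge:** if `A`, `A'` are full rank and `Ψ[A] = Ψ[A']`, then there are invertible
matrices `G n` (with `G 0 = 1` and `G N = 1`) such that
`(A')^s(n) = G(n-1)⁻¹ A^s(n) G(n)` for all sites `n` and physical indices `s`. -/
theorem mps_unique_up_to_gauge (N : ℕ) (q : Fin N → ℕ) (D : ℕ → ℕ)
    (h0 : D 0 = 1) (hN : D N = 1)
    (A A' : (n : Fin N) → Fin (q n) → Matrix (Fin (D n.val)) (Fin (D (n.val + 1))) ℂ)
    (hA : MPS.FullRank A) (hA' : MPS.FullRank A')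
    (hpsi : MPS.psi (hN.trans h0.symm) A = MPS.psi (hN.trans h0.symm) A') :
    ∃ G : (n : ℕ) → Matrix (Fin (D n)) (Fin (D n)) ℂ,
      G 0 = 1 ∧ G N = 1 ∧ (∀ n, n ≤ N → IsUnit (G n)) ∧
      ∀ (n : Fin N) (s : Fin (q n)), A' n s = (G n.val)⁻¹ * A n s * G (n.val + 1) := by
  classical
  refine ⟨fun n => if h : n ≤ N then MPS.GG A A' n h else 1, ?_, ?_, ?_, ?_⟩
  · show (if h : (0:ℕ) ≤ N then MPS.GG A A' 0 h else 1) = 1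
    rw [dif_pos (Nat.zero_le N)]
    exact MPS.GG_zero h0 hN A A' hA hA' hpsi
  · show (if h : N ≤ N then MPS.GG A A' N h else 1) = 1
    rw [dif_pos le_rfl]
    exact MPS.GG_last h0 hN A A' hA hA' hpsi
  · intro n hn
    show IsUnit (if h : n ≤ N then MPS.GG A A' n h else 1)
    rw [dif_pos hn]
    exact MPS.GG_isUnit h0 hN A A' hA hA' hpsi n hn
  · intro n s
    have hle : n.val ≤ N := Nat.le_of_lt n.isLt
    show A' n s = (if h : n.val ≤ N then MPS.GG A A' n.val h else 1)⁻¹ * A n s *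
      (if h : n.val + 1 ≤ N then MPS.GG A A' (n.val + 1) h else 1)
    rw [dif_pos hle, dif_pos (show n.val + 1 ≤ N from n.isLt)]
    have hkey := MPS.GG_site h0 hN A A' hA hA' hpsi n s
    have hu := MPS.GG_isUnit h0 hN A A' hA hA' hpsi n.val hle
    have hinv : (MPS.GG A A' n.val hle)⁻¹ * MPS.GG A A' n.val hle = 1 :=
      Matrix.nonsing_inv_mul _ ((Matrix.isUnit_iff_isUnit_det _).mp hu)
    calc A' n s = 1 * A' n s := (Matrix.one_mul _).symm
      _ = (MPS.GG A A' n.val hle)⁻¹ * (MPS.GG A A' n.val hle * A' n s) := by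
          rw [← Matrix.mul_assoc, hinv, Matrix.one_mul]
      _ = (MPS.GG A A' n.val hle)⁻¹ * (A n s * MPS.GG A A' (n.val + 1) n.isLt) := by
          rw [hkey]
      _ = (MPS.GG A A' n.val hle)⁻¹ * A n s * MPS.GG A A' (n.val + 1) n.isLt := by
          rw [Matrix.mul_assoc]
end
end

section
/- The left principal connection reproduces the gauge algebra: let A be a full-rank MPS parameter, let x(n) ∈ ℂ^{D_n×D_n} for n = 0,…,N with x(0) = 0 and x(N) = 0, and set B^s(n) = A^s(n)·x(n) − x(n−1)·A^s(n). Define recursively y(0) = 0 and y(n) = Σ_s A^s(n)† y(n−1) A^s(n) + Σ_s A^s(n)† l(n−1) B^s(n). Then for every n = 1,…,N−1 one has y(n) = l(n)·x(n), and hence the left connection ω^{(L)}_A(B)(n) := l(n)^{-1}·y(n) satisfies ω^{(L)}_A(B)(n) = x(n). -/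
open Matrix
open scoped ComplexOrder

noncomputable section

namespace MPS

variable {N : ℕ} {q : Fin N → ℕ} {D : ℕ → ℕ}

/-- The recursively defined family `y`: `y 0 = 0`,
`y (n+1) = Σ_s A^s(n)† y(n) A^s(n) + Σ_s A^s(n)† l(n) B^s(n)`. -/
def yMat (A B : (n : Fin N) → Fin (q n) → Matrix (Fin (D n.val)) (Fin (D (n.val + 1))) ℂ) :
    (k : ℕ) → k ≤ N → Matrix (Fin (D k)) (Fin (D k)) ℂ
  | 0, _ => 0
  | k + 1, h =>
      (∑ s : Fin (q ⟨k, h⟩),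
        (A ⟨k, h⟩ s)ᴴ * yMat A B k (Nat.le_of_succ_le h) * A ⟨k, h⟩ s) +
      (∑ s : Fin (q ⟨k, h⟩),
        (A ⟨k, h⟩ s)ᴴ * lMat A k (Nat.le_of_succ_le h) * B ⟨k, h⟩ s)

/-- The left principal connection `ω^{(L)}_A(B)(n) = l(n)⁻¹ · y(n)`. -/
def omegaL (A B : (n : Fin N) → Fin (q n) → Matrix (Fin (D n.val)) (Fin (D (n.val + 1))) ℂ)
    (n : ℕ) (h : n ≤ N) : Matrix (Fin (D n)) (Fin (D n)) ℂ :=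
  (lMat A n h)⁻¹ * yMat A B n h

end MPS

/-- **The left principal connection reproduces the gauge algebra:** for a full-rank MPS
parameter `A` and a vertical tangent direction `B^s(n) = A^s(n) x(n) − x(n−1) A^s(n)`
(with `x 0 = x N = 0`), one has `y(n) = l(n)·x(n)` and hence
`ω^{(L)}_A(B)(n) = l(n)⁻¹ y(n) = x(n)` for every `n = 1, …, N−1`. -/
theorem mps_connection_reproduces_gauge_algebra (N : ℕ) (q : Fin N → ℕ) (D : ℕ → ℕ)
    (h0 : D 0 = 1) (hN : D N = 1)
    (A : (n : Fin N) → Fin (q n) → Matrix (Fin (D n.val)) (Fin (D (n.val + 1))) ℂ)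
    (hA : MPS.FullRank A)
    (x : (k : ℕ) → Matrix (Fin (D k)) (Fin (D k)) ℂ) (hx0 : x 0 = 0) (hxN : x N = 0) :
    ∀ (n : ℕ) (h1 : 1 ≤ n) (h2 : n ≤ N - 1),
      MPS.yMat A (fun m s => A m s * x (m.val + 1) - x m.val * A m s) n (by omega)
          = MPS.lMat A n (by omega) * x n ∧
      MPS.omegaL A (fun m s => A m s * x (m.val + 1) - x m.val * A m s) n (by omega)
          = x n := by
  have key : ∀ (k : ℕ) (h : k ≤ N),
      MPS.yMat A (fun m s => A m s * x (m.val + 1) - x m.val * A m s) k h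
        = MPS.lMat A k h * x k := by
    intro k
    induction k with
    | zero => intro h; simp [MPS.yMat, MPS.lMat, hx0]
    | succ k ih =>
      intro h
      rw [MPS.yMat, MPS.lMat, ih (Nat.le_of_succ_le h), ← Finset.sum_add_distrib,
        Finset.sum_mul]
      refine Finset.sum_congr rfl fun s _ => ?_
      simp only [Matrix.mul_sub, Matrix.mul_assoc]
      rw [add_sub_cancel]
  intro n h1 h2
  have hl := (hA n (by omega)).1
  have inst := hl.isUnit.invertible
  refine ⟨key n (by omega), ?_⟩
  rw [MPS.omegaL, key n (by omega), Matrix.inv_mul_cancel_left_of_invertible]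
end
end

section
/- Every tangent parameter has a unique left-gauge-fixed representative in its additive gauge orbit: let A be a full-rank MPS parameter with open boundary conditions. For every tangent parameter B̃, there exists a unique family x = (x(1),…,x(N−1)) of complex D_n×D_n matrices (with x(0) = x(N) = 0) such that the tangent parameter B defined by B^s(n) = B̃^s(n) + A^s(n)·x(n) − x(n−1)·A^s(n) satisfies the left gauge-fixing conditions Σ_{s=1}^{q_n} A^s(n)† l(n−1) B^s(n) = 0 for all n = 1,…,N−1. -/
open Matrix
open scoped ComplexOrder

noncomputable section

section Aux

variable {N : ℕ} {q : Fin N → ℕ} {D : ℕ → ℕ}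

/-- The canonical gauge family, defined by forward recursion. -/
def gaugeX (A Bt : (n : Fin N) → Fin (q n) → Matrix (Fin (D n.val)) (Fin (D (n.val + 1))) ℂ) :
    (k : ℕ) → Matrix (Fin (D k)) (Fin (D k)) ℂ
  | 0 => 0
  | k + 1 =>
    if h : k + 1 < N then
      (MPS.lMat A (k + 1) h.le)⁻¹ *
        (∑ s : Fin (q ⟨k, by omega⟩),
            (A ⟨k, by omega⟩ s)ᴴ * MPS.lMat A k (by omega) * (gaugeX A Bt k *
              A ⟨k, by omega⟩ s)
         - ∑ s : Fin (q ⟨k, by omega⟩),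
            (A ⟨k, by omega⟩ s)ᴴ * MPS.lMat A k (by omega) * Bt ⟨k, by omega⟩ s)
    else 0

/-- Algebraic expansion of the gauge-fixing expression. -/
lemma gauge_expand (A Bt : (n : Fin N) → Fin (q n) → Matrix (Fin (D n.val))
      (Fin (D (n.val + 1))) ℂ) (n : Fin N)
    (x0 : Matrix (Fin (D n.val)) (Fin (D n.val)) ℂ)
    (x1 : Matrix (Fin (D (n.val + 1))) (Fin (D (n.val + 1))) ℂ) :
    ∑ s : Fin (q n),
        (A n s)ᴴ * MPS.lMat A n.val n.isLt.le * (Bt n s + A n s * x1 - x0 * A n s)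
      = MPS.lMat A (n.val + 1) n.isLt * x1
        + (∑ s : Fin (q n), (A n s)ᴴ * MPS.lMat A n.val n.isLt.le * Bt n s)
        - ∑ s : Fin (q n), (A n s)ᴴ * MPS.lMat A n.val n.isLt.le * (x0 * A n s) := by
  have hrec : MPS.lMat A (n.val + 1) n.isLt
      = ∑ s : Fin (q n), (A n s)ᴴ * MPS.lMat A n.val n.isLt.le * A n s := by
    conv_lhs => rw [MPS.lMat]
  have expand : ∀ s : Fin (q n),
      (A n s)ᴴ * MPS.lMat A n.val n.isLt.le * (Bt n s + A n s * x1 - x0 * A n s)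
        = ((A n s)ᴴ * MPS.lMat A n.val n.isLt.le * A n s) * x1
          + (A n s)ᴴ * MPS.lMat A n.val n.isLt.le * Bt n s
          - (A n s)ᴴ * MPS.lMat A n.val n.isLt.le * (x0 * A n s) := by
    intro s
    rw [Matrix.mul_sub, Matrix.mul_add, Matrix.mul_assoc _ (A n s) x1]
    abel
  rw [Finset.sum_congr rfl fun s _ => expand s, Finset.sum_sub_distrib,
    Finset.sum_add_distrib, ← Finset.sum_mul, ← hrec]

/-- With the constraint satisfied, `x1` is determined. -/
lemma gauge_solve (A Bt : (n : Fin N) → Fin (q n) → Matrix (Fin (D n.val))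
      (Fin (D (n.val + 1))) ℂ) (hA : MPS.FullRank A) (n : Fin N)
    (x0 : Matrix (Fin (D n.val)) (Fin (D n.val)) ℂ)
    (x1 : Matrix (Fin (D (n.val + 1))) (Fin (D (n.val + 1))) ℂ)
    (hc : ∑ s : Fin (q n),
        (A n s)ᴴ * MPS.lMat A n.val n.isLt.le * (Bt n s + A n s * x1 - x0 * A n s) = 0) :
    x1 = (MPS.lMat A (n.val + 1) n.isLt)⁻¹ *
        ((∑ s : Fin (q n), (A n s)ᴴ * MPS.lMat A n.val n.isLt.le * (x0 * A n s))
         - ∑ s : Fin (q n), (A n s)ᴴ * MPS.lMat A n.val n.isLt.le * Bt n s) := by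
  rw [gauge_expand] at hc
  have hinv : (MPS.lMat A (n.val + 1) n.isLt)⁻¹ * MPS.lMat A (n.val + 1) n.isLt = 1 :=
    Matrix.nonsing_inv_mul _ (hA (n.val + 1) n.isLt).1.det_pos.ne'.isUnit
  have hmul : MPS.lMat A (n.val + 1) n.isLt * x1
      = (∑ s : Fin (q n), (A n s)ᴴ * MPS.lMat A n.val n.isLt.le * (x0 * A n s))
        - ∑ s : Fin (q n), (A n s)ᴴ * MPS.lMat A n.val n.isLt.le * Bt n s := by
    have := hc
    abel_nf at this ⊢
    linear_combination (norm := abel) this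
  calc x1 = (MPS.lMat A (n.val + 1) n.isLt)⁻¹ * (MPS.lMat A (n.val + 1) n.isLt * x1) := by
        rw [← mul_assoc, hinv, one_mul]
    _ = _ := by rw [hmul]

end Aux

/-- **Existence and uniqueness of the left-gauge-fixed representative:** for a full-rank
MPS parameter `A` and every tangent parameter `B̃`, there is a family `x` (with
`x 0 = 0`, `x N = 0`), unique on `0, …, N`, such that
`B^s(n) = B̃^s(n) + A^s(n) x(n) − x(n−1) A^s(n)` satisfies the left gauge-fixing
conditions `Σ_s A^s(n)† l(n−1) B^s(n) = 0` for all `n = 1, …, N−1`. -/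
theorem mps_left_gauge_fixing_exists_unique (N : ℕ) (q : Fin N → ℕ) (D : ℕ → ℕ)
    (h0 : D 0 = 1) (hN : D N = 1)
    (A Bt : (n : Fin N) → Fin (q n) → Matrix (Fin (D n.val)) (Fin (D (n.val + 1))) ℂ)
    (hA : MPS.FullRank A) :
    ∃ x : (k : ℕ) → Matrix (Fin (D k)) (Fin (D k)) ℂ,
      (x 0 = 0 ∧ x N = 0 ∧
        ∀ (n : Fin N), n.val + 1 < N →
          ∑ s : Fin (q n),
            (A n s)ᴴ * MPS.lMat A n.val n.isLt.le *
              (Bt n s + A n s * x (n.val + 1) - x n.val * A n s) = 0) ∧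
      ∀ x' : (k : ℕ) → Matrix (Fin (D k)) (Fin (D k)) ℂ,
        (x' 0 = 0 ∧ x' N = 0 ∧
          ∀ (n : Fin N), n.val + 1 < N →
            ∑ s : Fin (q n),
              (A n s)ᴴ * MPS.lMat A n.val n.isLt.le *
                (Bt n s + A n s * x' (n.val + 1) - x' n.val * A n s) = 0) →
        ∀ k, k ≤ N → x' k = x k := by
  refine ⟨gaugeX A Bt, ⟨rfl, ?_, ?_⟩, ?_⟩
  · -- x N = 0
    cases N with
    | zero => rfl
    | succ m => simp only [gaugeX, dif_neg (lt_irrefl (m + 1))]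
  · -- the gauge-fixing constraints
    intro n hn
    have hx1 : gaugeX A Bt (n.val + 1) = (MPS.lMat A (n.val + 1) n.isLt)⁻¹ *
        ((∑ s : Fin (q n), (A n s)ᴴ * MPS.lMat A n.val n.isLt.le * (gaugeX A Bt n.val * A n s))
         - ∑ s : Fin (q n), (A n s)ᴴ * MPS.lMat A n.val n.isLt.le * Bt n s) := by
      simp only [gaugeX, dif_pos hn]
    rw [gauge_expand A Bt n (gaugeX A Bt n.val) (gaugeX A Bt (n.val + 1)), hx1,
      ← mul_assoc, Matrix.mul_nonsing_inv _ (hA (n.val + 1) n.isLt).1.det_pos.ne'.isUnit, one_mul]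
    abel
  · rintro x' ⟨h0', hN', hc'⟩ k
    induction k with
    | zero => intro _; rw [h0']; rfl
    | succ k ih =>
      intro hk
      by_cases h : k + 1 < N
      · set n : Fin N := ⟨k, by omega⟩ with hn
        have hx' := gauge_solve A Bt hA n (x' k) (x' (k + 1)) (hc' n h)
        have hx : gaugeX A Bt (k + 1) = (MPS.lMat A (n.val + 1) n.isLt)⁻¹ *
            ((∑ s : Fin (q n), (A n s)ᴴ * MPS.lMat A n.val n.isLt.le * (gaugeX A Bt k * A n s))
             - ∑ s : Fin (q n), (A n s)ᴴ * MPS.lMat A n.val n.isLt.le * Bt n s) := by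
          simp only [gaugeX, dif_pos h]
          rfl
        rw [hx', hx, ih (by omega)]
      · have hkN : k + 1 = N := by omega
        have hz : gaugeX A Bt (k + 1) = 0 := by
          simp only [gaugeX, dif_neg h]
        rw [hz]
        subst hkN
        exact hN'
end
end

section
/- Under left gauge fixing the overlap of MPS tangent vectors becomes a sum of local terms: let A be an MPS parameter with open boundary conditions and let B and B' be tangent parameters that both satisfy the left gauge-fixing conditions Σ_s A^s(n)† l(n−1) B^s(n) = 0 and Σ_s A^s(n)† l(n−1) (B')^s(n) = 0 for all n = 1,…,N−1. Then ⟨Φ[B; A], Φ[B'; A]⟩ = Σ_{n=1}^N tr[(Σ_{s=1}^{q_n} B^s(n)† l(n−1) (B')^s(n))·r(n)], where the inner product on ⊗_{n=1}^N ℂ^{q_n} is conjugate-linear in the first argument. -/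
open Matrix
open scoped ComplexOrder

noncomputable section

namespace MPS

variable {N : ℕ} {q : Fin N → ℕ} {D : ℕ → ℕ}

/-- The MPS tangent vector `Φ[B; A]`, whose coefficient on the basis vector indexed by
`s` is `Σ_{n=1}^N tr[A^{s_1}(1) ⋯ B^{s_n}(n) ⋯ A^{s_N}(N)]`. -/
def phi (hD : D N = D 0)
    (A B : (n : Fin N) → Fin (q n) → Matrix (Fin (D n.val)) (Fin (D (n.val + 1))) ℂ) :
    ((n : Fin N) → Fin (q n)) → ℂ :=
  fun s => ∑ n : Fin N, psi hD (Function.update A n (B n)) s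

end MPS

namespace MPS

variable {N : ℕ} {q : Fin N → ℕ} {D : ℕ → ℕ}

variable (A C C' : (n : Fin N) → Fin (q n) → Matrix (Fin (D n.val)) (Fin (D (n.val + 1))) ℂ)

/- ---------------- rMat lemmas ---------------- -/

lemma rAux_cast {j j' : ℕ} (e : j = j') (hj : j ≤ N) (hj' : j' ≤ N) :
    rAux A j hj = (rAux A j' hj').submatrix (Fin.cast (by rw [e])) (Fin.cast (by rw [e])) := by
  subst e; rfl

lemma rMat_last : rMat A N le_rfl = 1 := by
  rw [rMat, rAux_cast A (Nat.sub_self N) _ (by omega)]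
  show ((rAux A 0 _).submatrix _ _).submatrix _ _ = 1
  rw [rAux]
  ext i j
  simp [Matrix.one_apply, Fin.ext_iff]

lemma sum_conj_transport {a b : ℕ} (hab : a = b) (ha : a < N) (hb : b < N)
    (M : Matrix (Fin (D (a + 1))) (Fin (D (a + 1))) ℂ)
    (M' : Matrix (Fin (D (b + 1))) (Fin (D (b + 1))) ℂ)
    (hM : M = M'.submatrix (Fin.cast (by rw [hab])) (Fin.cast (by rw [hab])))
    (e1 : D b = D a) :
    (∑ s : Fin (q ⟨a, ha⟩), A ⟨a, ha⟩ s * M * (A ⟨a, ha⟩ s)ᴴ).submatrix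
        (Fin.cast e1) (Fin.cast e1)
      = ∑ s : Fin (q ⟨b, hb⟩), A ⟨b, hb⟩ s * M' * (A ⟨b, hb⟩ s)ᴴ := by
  subst hab; subst hM; rfl

set_option maxHeartbeats 1000000 in
lemma rMat_succ (k : ℕ) (hk : k < N) :
    rMat A k (Nat.le_of_lt hk)
      = ∑ s : Fin (q ⟨k, hk⟩), A ⟨k, hk⟩ s * rMat A (k + 1) hk * (A ⟨k, hk⟩ s)ᴴ := by
  rw [rMat, rAux_cast A (by omega : N - k = (N - (k+1)) + 1) _ (by omega)]
  rw [rAux]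
  rw [Matrix.submatrix_submatrix]
  have hcomp : ∀ (n1 n2 n3 : ℕ) (p1 : n1 = n2) (p2 : n2 = n3),
      (Fin.cast p2 ∘ Fin.cast p1) = Fin.cast (p1.trans p2) := by
    intro n1 n2 n3 p1 p2; funext i; rfl
  rw [hcomp]
  exact sum_conj_transport A (by omega) (by omega) hk _ (rMat A (k+1) hk) (by ext i j; rfl) _

/- ---------------- lMat / Lmix lemmas ---------------- -/

lemma lMat_herm : ∀ (k : ℕ) (h : k ≤ N), (lMat A k h)ᴴ = lMat A k h
  | 0, _ => by simp [lMat]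
  | k + 1, h => by
    rw [lMat]
    simp [Matrix.conjTranspose_mul, Matrix.mul_assoc, lMat_herm k (Nat.le_of_succ_le h), Matrix.conjTranspose_sum]

def Lmix (C C' : (n : Fin N) → Fin (q n) → Matrix (Fin (D n.val)) (Fin (D (n.val + 1))) ℂ) :
    (k : ℕ) → k ≤ N → Matrix (Fin (D k)) (Fin (D k)) ℂ
  | 0, _ => 1
  | k + 1, h => ∑ s : Fin (q ⟨k, h⟩),
      (C ⟨k, h⟩ s)ᴴ * Lmix C C' k (Nat.le_of_succ_le h) * C' ⟨k, h⟩ s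

lemma Lmix_cast {k k' : ℕ} (e : k = k') (h : k ≤ N) (h' : k' ≤ N) :
    Lmix C C' k h = (Lmix C C' k' h').submatrix (Fin.cast (by rw [e])) (Fin.cast (by rw [e])) := by
  subst e; rfl

lemma Lmix_eq_lMat : ∀ (k : ℕ) (h : k ≤ N),
    (∀ j : Fin N, j.val < k → C j = A j) → (∀ j : Fin N, j.val < k → C' j = A j) →
    Lmix C C' k h = lMat A k h
  | 0, _, _, _ => rfl
  | k + 1, h, hC, hC' => by
    rw [Lmix, lMat,
      Lmix_eq_lMat k (Nat.le_of_succ_le h)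
        (fun j hj => hC j (by omega)) (fun j hj => hC' j (by omega)),
      hC ⟨k, h⟩ (by simp), hC' ⟨k, h⟩ (by simp)]

lemma Lmix_zero_of_le : ∀ (d k : ℕ) (h : k + d ≤ N) (hk : k ≤ N),
    Lmix C C' k hk = 0 → Lmix C C' (k + d) h = 0
  | 0, k, h, hk, hz => hz
  | d + 1, k, h, hk, hz => by
    have h2 := Lmix_zero_of_le d k (Nat.le_of_succ_le h) hk hz
    show Lmix C C' ((k + d) + 1) h = 0
    rw [Lmix]
    simp [h2]

lemma trace_Lmix_eq_zero (k : ℕ) (hk : k ≤ N) (hz : Lmix C C' k hk = 0) :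
    Matrix.trace (Lmix C C' N le_rfl) = 0 := by
  have h2 := Lmix_zero_of_le C C' (N - k) k (by omega) hk hz
  rw [Lmix_cast C C' (by omega : N = k + (N - k)) le_rfl (by omega), h2]
  simp

/- ---------------- counting ---------------- -/

def cCard (q : Fin N → ℕ) (k : ℕ) : ℕ :=
  ∏ j ∈ Finset.univ.filter (fun j : Fin N => k ≤ j.val), q j

lemma cCard_last : cCard q N = 1 := by
  rw [cCard]
  apply Finset.prod_eq_one
  intro j hj
  exact absurd (Finset.mem_filter.1 hj).2 (by omega)

lemma cCard_succ (k : ℕ) (hk : k < N) : cCard q k = q ⟨k, hk⟩ * cCard q (k + 1) := by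
  rw [cCard, cCard]
  rw [show (Finset.univ.filter (fun j : Fin N => k ≤ j.val))
      = insert ⟨k, hk⟩ (Finset.univ.filter (fun j : Fin N => k + 1 ≤ j.val)) by
    ext j
    simp [Finset.mem_filter, Fin.ext_iff]
    omega]
  rw [Finset.prod_insert (by simp)]

lemma cCard_zero_eq : Fintype.card ((n : Fin N) → Fin (q n)) = cCard q 0 := by
  rw [Fintype.card_pi, cCard]
  rw [Finset.filter_true_of_mem (fun j _ => Nat.zero_le _)]
  simp

/- ---------------- sum over configurations ---------------- -/

lemma prodAux_congr_s10 (s s' : (n : Fin N) → Fin (q n)) :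
    ∀ (k : ℕ) (h : k ≤ N), (∀ j : Fin N, j.val < k → s j = s' j) →
    prodAux C s k h = prodAux C s' k h
  | 0, _, _ => rfl
  | k + 1, h, hs => by
    rw [prodAux, prodAux, prodAux_congr_s10 s s' k (Nat.le_of_succ_le h) (fun j hj => hs j (by omega)),
      hs ⟨k, h⟩ (by simp)]

lemma sum_prodAux : ∀ (k : ℕ) (h : k ≤ N),
    ∑ s : (n : Fin N) → Fin (q n), (prodAux C s k h)ᴴ * prodAux C' s k h
      = (cCard q k : ℂ) • Lmix C C' k h
  | 0, h => by
    simp only [prodAux, Lmix, conjTranspose_one, one_mul]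
    rw [Finset.sum_const, Finset.card_univ, cCard_zero_eq, Nat.cast_smul_eq_nsmul]
  | k + 1, h => by
    have hkN : k ≤ N := Nat.le_of_succ_le h
    set i : Fin N := ⟨k, h⟩ with hidef
    set e := Equiv.piSplitAt i (fun n => Fin (q n)) with hedef
    have hsymm_at : ∀ (t : Fin (q i)) (g : (j : {j // j ≠ i}) → Fin (q j.val)),
        e.symm (t, g) i = t := by
      intro t g
      simp [hedef, Equiv.piSplitAt]
    have hsymm_ne : ∀ (t t' : Fin (q i)) (g : (j : {j // j ≠ i}) → Fin (q j.val))
        (j : Fin N), j ≠ i → e.symm (t, g) j = e.symm (t', g) j := by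
      intro t t' g j hj
      simp [hedef, Equiv.piSplitAt, dif_neg hj]
    have key : ∀ t : Fin (q i),
        ∑ g : (j : {j // j ≠ i}) → Fin (q j.val),
          (prodAux C (e.symm (t, g)) k hkN)ᴴ * prodAux C' (e.symm (t, g)) k hkN
        = (cCard q (k + 1) : ℂ) • Lmix C C' k hkN := by
      intro t
      have hfull := sum_prodAux k hkN
      rw [← Equiv.sum_comp e.symm, Fintype.sum_prod_type] at hfull
      have indep : ∀ (t' : Fin (q i)) (g : (j : {j // j ≠ i}) → Fin (q j.val)),
          (prodAux C (e.symm (t', g)) k hkN)ᴴ * prodAux C' (e.symm (t', g)) k hkN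
          = (prodAux C (e.symm (t, g)) k hkN)ᴴ * prodAux C' (e.symm (t, g)) k hkN := by
        intro t' g
        have hpts : ∀ j : Fin N, j.val < k → e.symm (t', g) j = e.symm (t, g) j := by
          intro j hj
          refine hsymm_ne t' t g j ?_
          intro hji
          rw [hji, hidef] at hj
          simp at hj
        rw [prodAux_congr_s10 C (e.symm (t', g)) (e.symm (t, g)) k hkN hpts,
          prodAux_congr_s10 C' (e.symm (t', g)) (e.symm (t, g)) k hkN hpts]
      simp only [indep] at hfull
      rw [Finset.sum_const, Finset.card_univ, Fintype.card_fin] at hfull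
      rw [← Nat.cast_smul_eq_nsmul ℂ] at hfull
      rw [cCard_succ k h, Nat.cast_mul, mul_smul] at hfull
      have hq : ((q i : ℕ) : ℂ) ≠ 0 := Nat.cast_ne_zero.2 t.pos.ne'
      rw [show (⟨k, h⟩ : Fin N) = i from rfl] at hfull
      have := congrArg (fun Y => ((q i : ℕ) : ℂ)⁻¹ • Y) hfull
      simpa [smul_smul, ← mul_assoc, inv_mul_cancel₀ hq] using this
    calc ∑ s : (n : Fin N) → Fin (q n),
            (prodAux C s (k + 1) h)ᴴ * prodAux C' s (k + 1) h
        = ∑ t : Fin (q i), ∑ g : (j : {j // j ≠ i}) → Fin (q j.val),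
            (C i t)ᴴ * ((prodAux C (e.symm (t, g)) k hkN)ᴴ * prodAux C' (e.symm (t, g)) k hkN)
              * C' i t := by
          rw [← Equiv.sum_comp e.symm, Fintype.sum_prod_type]
          refine Finset.sum_congr rfl fun t _ => Finset.sum_congr rfl fun g _ => ?_
          rw [prodAux, prodAux, hsymm_at t g]
          simp only [Matrix.conjTranspose_mul, Matrix.mul_assoc]
          rfl
      _ = ∑ t : Fin (q i),
            (C i t)ᴴ * ((cCard q (k + 1) : ℂ) • Lmix C C' k hkN) * C' i t := by
          refine Finset.sum_congr rfl fun t _ => ?_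
          rw [← Matrix.sum_mul, ← Matrix.mul_sum, key t]
      _ = (cCard q (k + 1) : ℂ) • Lmix C C' (k + 1) h := by
          rw [Lmix, Finset.smul_sum]
          refine Finset.sum_congr rfl fun t _ => ?_
          simp [Matrix.mul_smul, Matrix.smul_mul]
          rfl

/- ---------------- overlap as trace ---------------- -/

lemma sum_conj_psi (h0 : D 0 = 1) (hN : D N = 1) :
    ∑ s : (n : Fin N) → Fin (q n),
      (starRingEnd ℂ) (psi (hN.trans h0.symm) C s) * psi (hN.trans h0.symm) C' s
      = Matrix.trace (Lmix C C' N le_rfl) := by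
  have hsum := sum_prodAux C C' N le_rfl
  rw [cCard_last, Nat.cast_one, one_smul] at hsum
  rw [← hsum, Matrix.trace_sum]
  refine Finset.sum_congr rfl fun s _ => ?_
  haveI u0 : Unique (Fin (D 0)) := by rw [h0]; infer_instance
  haveI uN : Unique (Fin (D N)) := by rw [hN]; infer_instance
  simp only [psi, Matrix.trace, Matrix.diag, Matrix.mul_apply, Matrix.submatrix_apply,
    Matrix.conjTranspose_apply, Fintype.sum_unique, starRingEnd_apply, id_eq]
  congr 1
  · exact congrArg star (congrArg _ (Subsingleton.elim _ _))
  · exact congrArg _ (Subsingleton.elim _ _)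

/- ---------------- tail contraction ---------------- -/

lemma trace_tail : ∀ (d k : ℕ) (h : k + d = N)
    (hC : ∀ j : Fin N, k ≤ j.val → C j = A j) (hC' : ∀ j : Fin N, k ≤ j.val → C' j = A j),
    Matrix.trace (Lmix C C' N le_rfl)
      = Matrix.trace (Lmix C C' k (by omega) * rMat A k (by omega))
  | 0, k, h, hC, hC' => by
    have e : k = N := by omega
    subst e
    rw [rMat_last, Matrix.mul_one]
  | d + 1, k, h, hC, hC' => by
    have hk1 : k + 1 ≤ N := by omega
    have step := trace_tail d (k + 1) (by omega)
      (fun j hj => hC j (by omega)) (fun j hj => hC' j (by omega))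
    rw [step, rMat_succ A k (by omega), Matrix.mul_sum, Matrix.trace_sum, Lmix,
      Matrix.sum_mul, Matrix.trace_sum]
    refine Finset.sum_congr rfl fun t _ => ?_
    rw [hC ⟨k, hk1⟩ (by simp), hC' ⟨k, hk1⟩ (by simp)]
    simp only [Matrix.mul_assoc]
    rw [Matrix.trace_mul_comm]
    simp only [Matrix.mul_assoc]

end MPS

/-- **Under left gauge fixing the overlap of MPS tangent vectors is a sum of local
terms:** if `B` and `B'` both satisfy the left gauge-fixing conditions at sites
`n = 1, …, N−1`, then
`⟨Φ[B; A], Φ[B'; A]⟩ = Σ_{n=1}^N tr[(Σ_s B^s(n)† l(n−1) B'^s(n)) · r(n)]`. -/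
theorem mps_overlap_of_left_gauge_fixed (N : ℕ) (q : Fin N → ℕ) (D : ℕ → ℕ)
    (h0 : D 0 = 1) (hN : D N = 1)
    (A B B' : (n : Fin N) → Fin (q n) → Matrix (Fin (D n.val)) (Fin (D (n.val + 1))) ℂ)
    (hB : ∀ n : Fin N, n.val + 1 < N →
      ∑ s : Fin (q n), (A n s)ᴴ * MPS.lMat A n.val n.isLt.le * B n s = 0)
    (hB' : ∀ n : Fin N, n.val + 1 < N →
      ∑ s : Fin (q n), (A n s)ᴴ * MPS.lMat A n.val n.isLt.le * B' n s = 0) :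
    ∑ s : (n : Fin N) → Fin (q n),
        (starRingEnd ℂ) (MPS.phi (hN.trans h0.symm) A B s) *
          MPS.phi (hN.trans h0.symm) A B' s
      = ∑ n : Fin N,
          Matrix.trace
            ((∑ s : Fin (q n), (B n s)ᴴ * MPS.lMat A n.val n.isLt.le * B' n s) *
              MPS.rMat A (n.val + 1) n.isLt) := by
  have upd_ne : ∀ (G : (n : Fin N) → Fin (q n) → Matrix (Fin (D n.val)) (Fin (D (n.val + 1))) ℂ)
      (p j : Fin N), j ≠ p → Function.update A p (G p) j = A j :=
    fun G p j h => Function.update_of_ne h _ _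
  have key : ∀ n m : Fin N,
      (∑ s : (k : Fin N) → Fin (q k),
        (starRingEnd ℂ) (MPS.psi (hN.trans h0.symm) (Function.update A n (B n)) s) *
          MPS.psi (hN.trans h0.symm) (Function.update A m (B' m)) s)
      = Matrix.trace (MPS.Lmix (Function.update A n (B n)) (Function.update A m (B' m)) N le_rfl) :=
    fun n m => MPS.sum_conj_psi _ _ h0 hN
  have hoff : ∀ n m : Fin N, n ≠ m →
      Matrix.trace (MPS.Lmix (Function.update A n (B n)) (Function.update A m (B' m)) N le_rfl) = 0 := by
    intro n m hnm
    rcases hnm.lt_or_gt with hlt | hlt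
    · refine MPS.trace_Lmix_eq_zero _ _ (n.val + 1) n.isLt ?_
      rw [MPS.Lmix, MPS.Lmix_eq_lMat A _ _ n.val (Nat.le_of_succ_le n.isLt)
        (fun j hj => upd_ne B n j (Fin.ne_of_lt (Fin.lt_def.mpr hj)))
        (fun j hj => upd_ne B' m j (Fin.ne_of_lt (lt_trans (Fin.lt_def.mpr hj) hlt)))]
      simp only [Fin.eta, Function.update_self, Function.update_of_ne hnm]
      have h2 := hB n (Nat.lt_of_le_of_lt (Nat.succ_le_of_lt hlt) m.isLt)
      have h3 : (∑ s : Fin (q n), (A n s)ᴴ * MPS.lMat A n.val n.isLt.le * B n s)ᴴ = 0 := by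
        rw [h2]; simp
      rw [Matrix.conjTranspose_sum] at h3
      simp only [Matrix.conjTranspose_mul, Matrix.conjTranspose_conjTranspose,
        MPS.lMat_herm, Matrix.mul_assoc] at h3 ⊢
      exact h3
    · refine MPS.trace_Lmix_eq_zero _ _ (m.val + 1) m.isLt ?_
      rw [MPS.Lmix, MPS.Lmix_eq_lMat A _ _ m.val (Nat.le_of_succ_le m.isLt)
        (fun j hj => upd_ne B n j (Fin.ne_of_lt (lt_trans (Fin.lt_def.mpr hj) hlt)))
        (fun j hj => upd_ne B' m j (Fin.ne_of_lt (Fin.lt_def.mpr hj)))]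
      simp only [Fin.eta, Function.update_self, Function.update_of_ne hnm.symm]
      exact hB' m (Nat.lt_of_le_of_lt (Nat.succ_le_of_lt hlt) n.isLt)
  have hdiag : ∀ n : Fin N,
      Matrix.trace (MPS.Lmix (Function.update A n (B n)) (Function.update A n (B' n)) N le_rfl)
      = Matrix.trace
          ((∑ s : Fin (q n), (B n s)ᴴ * MPS.lMat A n.val n.isLt.le * B' n s) *
            MPS.rMat A (n.val + 1) n.isLt) := by
    intro n
    have hgt : ∀ j : Fin N, n.val + 1 ≤ j.val → j ≠ n :=
      fun j hj e => by rw [e] at hj; omega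
    rw [MPS.trace_tail A _ _ (N - (n.val + 1)) (n.val + 1) (by omega)
      (fun j hj => upd_ne B n j (hgt j hj))
      (fun j hj => upd_ne B' n j (hgt j hj))]
    have hL : MPS.Lmix (Function.update A n (B n)) (Function.update A n (B' n))
        (n.val + 1) n.isLt
        = ∑ s : Fin (q n), (B n s)ᴴ * MPS.lMat A n.val n.isLt.le * B' n s := by
      rw [MPS.Lmix, MPS.Lmix_eq_lMat A _ _ n.val (Nat.le_of_succ_le n.isLt)
        (fun j hj => upd_ne B n j (Fin.ne_of_lt (Fin.lt_def.mpr hj)))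
        (fun j hj => upd_ne B' n j (Fin.ne_of_lt (Fin.lt_def.mpr hj)))]
      simp only [Fin.eta, Function.update_self]
    rw [hL]
  calc ∑ s : (n : Fin N) → Fin (q n),
        (starRingEnd ℂ) (MPS.phi (hN.trans h0.symm) A B s) *
          MPS.phi (hN.trans h0.symm) A B' s
      = ∑ n : Fin N, ∑ m : Fin N, ∑ s : (k : Fin N) → Fin (q k),
          (starRingEnd ℂ) (MPS.psi (hN.trans h0.symm) (Function.update A n (B n)) s) *
            MPS.psi (hN.trans h0.symm) (Function.update A m (B' m)) s := by
        simp only [MPS.phi, map_sum, Finset.sum_mul_sum]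
        rw [Finset.sum_comm]
        exact Finset.sum_congr rfl fun n _ => Finset.sum_comm
    _ = ∑ n : Fin N, ∑ m : Fin N,
          Matrix.trace (MPS.Lmix (Function.update A n (B n)) (Function.update A m (B' m)) N le_rfl) :=
        Finset.sum_congr rfl fun n _ => Finset.sum_congr rfl fun m _ => key n m
    _ = ∑ n : Fin N,
          Matrix.trace (MPS.Lmix (Function.update A n (B n)) (Function.update A n (B' n)) N le_rfl) :=
        Finset.sum_congr rfl fun n _ => Finset.sum_eq_single n
          (fun m _ hm => hoff n m (Ne.symm hm)) (fun h => absurd (Finset.mem_univ n) h)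
    _ = ∑ n : Fin N,
          Matrix.trace
            ((∑ s : Fin (q n), (B n s)ᴴ * MPS.lMat A n.val n.isLt.le * B' n s) *
              MPS.rMat A (n.val + 1) n.isLt) :=
        Finset.sum_congr rfl fun n _ => hdiag n
end
end

section
/- Vertical directions are annihilated by the uniform MPS tangent map on a ring: let A be a q-tuple of complex D×D matrices, x a complex D×D matrix, α ∈ ℂ, and define B^s = A^s·x − x·A^s + α·A^s. Then the translation-invariant tangent vector satisfies Φ(B; A) = N·α·Ψ(A); in particular Φ(A^s x − x A^s; A) = 0. -/
/-!
STATEMENT 14: Vertical directions are annihilated by the uniform MPS tangent map on a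
ring: with `B^s = A^s x − x A^s + α A^s` one has `Φ(B; A) = N·α·Ψ(A)`; in particular
`Φ(A^s x − x A^s; A) = 0`.
-/

open Matrix

noncomputable section

namespace uMPS

/-- The uniform matrix product state on a ring of `N` sites: the coefficient on the basis
vector indexed by `(s_1, …, s_N)` is `tr[A^{s_1} ⋯ A^{s_N}]`. -/
def psi (D q N : ℕ) (A : Fin q → Matrix (Fin D) (Fin D) ℂ) : (Fin N → Fin q) → ℂ :=
  fun s => Matrix.trace (List.ofFn fun n : Fin N => A (s n)).prod

/-- The translation-invariant uniform MPS tangent vector `Φ(B; A)`: the coefficient on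
the basis vector indexed by `(s_1, …, s_N)` is
`Σ_{n=1}^N tr[A^{s_1} ⋯ A^{s_{n-1}} B^{s_n} A^{s_{n+1}} ⋯ A^{s_N}]`. -/
def phi (D q N : ℕ) (A B : Fin q → Matrix (Fin D) (Fin D) ℂ) : (Fin N → Fin q) → ℂ :=
  fun s => ∑ n : Fin N,
    Matrix.trace (List.ofFn fun m : Fin N => if m = n then B (s m) else A (s m)).prod

end uMPS

/-- Setting an entry of `List.ofFn` is `List.ofFn` of a `Function.update`. -/
lemma ofFn_set_update {β : Type*} (N : ℕ) (C : Fin N → β) (n : Fin N) (M : β) :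
    (List.ofFn C).set n M = List.ofFn (Function.update C n M) := by
  apply List.ext_getElem <;> simp [Function.update, List.getElem_set, Fin.ext_iff]
  intro i h1
  by_cases h : (n : ℕ) = i
  · subst h; simp
  · rw [if_neg h, if_neg (fun hh => h hh.symm)]

/-- Main computation: the tangent map applied to a vertical direction. -/
lemma uMPS_main (D q N : ℕ) (A : Fin q → Matrix (Fin D) (Fin D) ℂ)
    (x : Matrix (Fin D) (Fin D) ℂ) (α : ℂ) :
    uMPS.phi D q N A (fun s => A s * x - x * A s + α • A s)
        = ((N : ℂ) * α) • uMPS.psi D q N A := by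
  funext s
  set B : Fin q → Matrix (Fin D) (Fin D) ℂ := fun t => A t * x - x * A t + α • A t with hB
  set l : List (Matrix (Fin D) (Fin D) ℂ) := List.ofFn (fun m : Fin N => A (s m)) with hl
  have hlen : l.length = N := by simp [hl]
  set g : ℕ → ℂ := fun k => Matrix.trace ((l.take k).prod * x * (l.drop k).prod) with hg
  have hget : ∀ n : Fin N, l[(n : ℕ)]'(by simp [hlen]) = A (s n) := by
    intro n; simp [hl]
  have h1 : ∀ n : Fin N, (l.take n).prod * A (s n) = (l.take (n + 1)).prod := by
    intro n
    rw [List.take_succ, List.prod_append, List.getElem?_eq_getElem (by simp [hlen]), hget]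
    simp
  have h2 : ∀ n : Fin N, A (s n) * (l.drop (n + 1)).prod = (l.drop n).prod := by
    intro n
    conv_rhs => rw [List.drop_eq_getElem_cons (by simp [hlen] : (n : ℕ) < l.length)]
    rw [List.prod_cons, hget]
  have h3 : ∀ k : ℕ, (l.take k).prod * (l.drop k).prod = l.prod := by
    intro k; rw [← List.prod_append, List.take_append_drop]
  have hterm : ∀ n : Fin N,
      Matrix.trace (List.ofFn fun m : Fin N => if m = n then B (s m) else A (s m)).prod
        = (g (n + 1) - g n) + α * Matrix.trace l.prod := by
    intro n
    have hfn : (fun m : Fin N => if m = n then B (s m) else A (s m))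
        = Function.update (fun m : Fin N => A (s m)) n (B (s n)) := by
      funext m
      by_cases h : m = n
      · subst h; simp
      · simp [Function.update, h]
    rw [hfn, ← ofFn_set_update, ← hl,
      List.set_eq_take_cons_drop _ (by simp [hlen] : (n : ℕ) < l.length),
      List.prod_append, List.prod_cons]
    have expand : (l.take n).prod * (B (s n) * (l.drop (n + 1)).prod)
        = (l.take (n+1)).prod * x * (l.drop (n+1)).prod
          - (l.take n).prod * x * (l.drop n).prod
          + α • ((l.take (n+1)).prod * (l.drop (n+1)).prod) := by
      rw [hB]
      simp only [add_mul, sub_mul, mul_add, mul_sub, smul_mul_assoc, mul_smul_comm]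
      rw [← h1 n, ← h2 n]
      noncomm_ring
    rw [expand, h3]
    simp [hg, mul_comm]
  rw [uMPS.phi]
  simp only [hterm]
  rw [Finset.sum_add_distrib, Finset.sum_sub_distrib]
  have tele : (∑ n : Fin N, g ((n : ℕ) + 1)) - ∑ n : Fin N, g (n : ℕ) = g N - g 0 := by
    rw [Fin.sum_univ_eq_sum_range (fun i => g (i + 1)), Fin.sum_univ_eq_sum_range g,
      ← Finset.sum_sub_distrib, Finset.sum_range_sub g]
  rw [tele]
  have hgN : g N = Matrix.trace (l.prod * x) := by
    simp [hg, List.take_of_length_le hlen.le, List.drop_of_length_le hlen.le]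
  have hg0 : g 0 = Matrix.trace (x * l.prod) := by simp [hg]
  rw [hgN, hg0, Matrix.trace_mul_comm, sub_self, zero_add]
  simp [uMPS.psi, ← hl, Finset.sum_const, mul_assoc]

/-- **Vertical directions are annihilated by the uniform MPS tangent map:** with
`B^s = A^s x − x A^s + α A^s`, `Φ(B; A) = N·α·Ψ(A)`; in particular
`Φ(A x − x A; A) = 0`. -/
theorem uMPS_vertical_tangent (D q N : ℕ) (A : Fin q → Matrix (Fin D) (Fin D) ℂ)
    (x : Matrix (Fin D) (Fin D) ℂ) (α : ℂ) :
    uMPS.phi D q N A (fun s => A s * x - x * A s + α • A s)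
        = ((N : ℂ) * α) • uMPS.psi D q N A ∧
    uMPS.phi D q N A (fun s => A s * x - x * A s) = 0 := by
  refine ⟨uMPS_main D q N A x α, ?_⟩
  have h := uMPS_main D q N A x 0
  simpa using h
end
end

section
/- The stabilizer of an injective uniform MPS parameter consists only of scalar matrices: let A be a q-tuple of complex D×D matrices, z ∈ ℂ, and r an invertible complex D×D matrix such that Σ_s A^s r A^s† = z·r and such that every complex D×D matrix ρ with Σ_s A^s ρ A^s† = z·ρ is a scalar multiple of r. If G is an invertible complex D×D matrix with G^{-1}A^sG = A^s for all s = 1,…,q, then G = c·1_D for some nonzero c ∈ ℂ. -/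
/-!
STATEMENT 15: The stabilizer of an injective uniform MPS parameter consists only of
scalar matrices.
-/

open Matrix

noncomputable section

/-- **The stabilizer of an injective uniform MPS parameter consists only of scalar
matrices:** if `z` is an eigenvalue of the completely positive map `ρ ↦ Σ_s A^s ρ A^s†`
whose eigenspace is one-dimensional and spanned by an invertible matrix `r`, then any
invertible `G` with `G⁻¹ A^s G = A^s` for all `s` is a nonzero scalar multiple of the
identity. -/
theorem uMPS_stabilizer_scalar (D q : ℕ) (A : Fin q → Matrix (Fin D) (Fin D) ℂ)
    (z : ℂ) (r : Matrix (Fin D) (Fin D) ℂ) (hr : IsUnit r)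
    (heig : ∑ s : Fin q, A s * r * (A s)ᴴ = z • r)
    (huniq : ∀ ρ : Matrix (Fin D) (Fin D) ℂ,
      (∑ s : Fin q, A s * ρ * (A s)ᴴ = z • ρ) → ∃ c : ℂ, ρ = c • r)
    (G : Matrix (Fin D) (Fin D) ℂ) (hG : IsUnit G)
    (hfix : ∀ s : Fin q, G⁻¹ * A s * G = A s) :
    ∃ c : ℂ, c ≠ 0 ∧ G = c • (1 : Matrix (Fin D) (Fin D) ℂ) := by
  -- From G⁻¹ A G = A, A commutes with G.
  have hcomm : ∀ s, A s * G = G * A s := by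
    intro s
    have h := hfix s
    calc A s * G = G * (G⁻¹ * A s * G) := by
          rw [← Matrix.mul_assoc, ← Matrix.mul_assoc, Matrix.mul_nonsing_inv _ ((Matrix.isUnit_iff_isUnit_det _).mp hG),
            Matrix.one_mul]
      _ = G * A s := by rw [h]
  -- G * r is also an eigenvector.
  have hGr : ∑ s : Fin q, A s * (G * r) * (A s)ᴴ = z • (G * r) := by
    calc ∑ s : Fin q, A s * (G * r) * (A s)ᴴ
        = ∑ s : Fin q, G * (A s * r * (A s)ᴴ) := by
          apply Finset.sum_congr rfl; intro s _
          rw [← Matrix.mul_assoc, hcomm s, Matrix.mul_assoc, Matrix.mul_assoc,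
            Matrix.mul_assoc]
      _ = G * (z • r) := by rw [← Finset.mul_sum, heig]
      _ = z • (G * r) := by rw [Matrix.mul_smul]
  obtain ⟨c, hc⟩ := huniq (G * r) hGr
  have hGc : G = c • 1 := by
    have : G * r = (c • 1) * r := by rw [hc, Matrix.smul_mul, Matrix.one_mul]
    calc G = G * r * r⁻¹ := by
          rw [Matrix.mul_assoc, Matrix.mul_nonsing_inv _ ((Matrix.isUnit_iff_isUnit_det _).mp hr), Matrix.mul_one]
      _ = (c • 1) * r * r⁻¹ := by rw [this]
      _ = c • 1 := by
          rw [Matrix.mul_assoc, Matrix.mul_nonsing_inv _ ((Matrix.isUnit_iff_isUnit_det _).mp hr), Matrix.mul_one]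
  by_cases hcz : c = 0
  · -- then G = 0, but G is a unit, so the ring is trivial
    subst hcz
    have hG0 : G = 0 := by simpa using hGc
    have h1 : (1 : Matrix (Fin D) (Fin D) ℂ) = 0 := by
      obtain ⟨u, hu⟩ := hG
      have := u.mul_inv
      rw [hu] at this
      simpa [hG0] using this.symm
    exact ⟨1, one_ne_zero, by rw [hG0, h1, smul_zero]⟩
  · exact ⟨c, hcz, hGc⟩
end
end

section
/- Injective uniform matrix product states are exponentially clustering: let E be a complex M×M matrix and l, r ∈ ℂ^M with E·r = r, E†·l = l, ⟨l, r⟩ = 1, and suppose the spectral radius of E − S is strictly less than 1, where S = r·l†. Then for every real c with spectralRadius(E − S) < c < 1 and all complex M×M matrices F, F', there exists a constant C ≥ 0 such that for all n ≥ 1, |l†·F·E^{n−1}·F'·r − (l†·F·r)·(l†·F'·r)| ≤ C·c^{n−1}. -/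
/-!
STATEMENT 18: Injective uniform matrix product states are exponentially clustering.
-/

open Matrix

noncomputable section

/-- In a complex Banach algebra, if the spectral radius of `a` is `< c`, then
`‖a ^ m‖ ≤ C * c ^ m` for some constant `C ≥ 0`. -/
lemma exists_pow_norm_le_of_spectralRadius_lt {A : Type*} [NormedRing A] [NormedAlgebra ℂ A]
    [CompleteSpace A] (a : A) {c : ℝ} (hc : spectralRadius ℂ a < ENNReal.ofReal c) :
    ∃ C : ℝ, 0 ≤ C ∧ ∀ m : ℕ, ‖a ^ m‖ ≤ C * c ^ m := by
  have hc0 : 0 < c := by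
    by_contra h
    push_neg at h
    rw [ENNReal.ofReal_eq_zero.mpr h] at hc
    exact (not_lt.mpr zero_le) hc
  have hten := spectrum.pow_norm_pow_one_div_tendsto_nhds_spectralRadius a
  have hev : ∀ᶠ m : ℕ in Filter.atTop,
      ENNReal.ofReal (‖a ^ m‖ ^ (1 / (m : ℝ))) < ENNReal.ofReal c :=
    hten.eventually_lt_const hc
  obtain ⟨N, hN⟩ := Filter.eventually_atTop.mp hev
  set K := max N 1 with hK
  have key : ∀ m, K ≤ m → ‖a ^ m‖ ≤ c ^ m := by
    intro m hm
    have h1 : 1 ≤ m := le_trans (le_max_right _ _) hm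
    have hlt := hN m (le_trans (le_max_left _ _) hm)
    rw [ENNReal.ofReal_lt_ofReal_iff hc0] at hlt
    have hnn : (0 : ℝ) ≤ ‖a ^ m‖ := norm_nonneg _
    have hm0 : (m : ℝ) ≠ 0 := by exact_mod_cast Nat.pos_of_ne_zero (by omega) |>.ne'
    calc ‖a ^ m‖ = (‖a ^ m‖ ^ (1 / (m : ℝ))) ^ m := by
          rw [← Real.rpow_natCast (‖a ^ m‖ ^ (1 / (m : ℝ))) m, ← Real.rpow_mul hnn,
            one_div, inv_mul_cancel₀ hm0, Real.rpow_one]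
      _ ≤ c ^ m := pow_le_pow_left₀ (Real.rpow_nonneg hnn _) hlt.le m
  refine ⟨1 + ∑ k ∈ Finset.range K, ‖a ^ k‖ / c ^ k, by positivity, fun m => ?_⟩
  rcases lt_or_ge m K with hm | hm
  · have h1 : ‖a ^ m‖ / c ^ m ≤ ∑ k ∈ Finset.range K, ‖a ^ k‖ / c ^ k :=
      Finset.single_le_sum (f := fun k => ‖a ^ k‖ / c ^ k)
        (fun k _ => by positivity) (Finset.mem_range.mpr hm)
    have hcm : (0 : ℝ) < c ^ m := pow_pos hc0 m
    rw [div_le_iff₀ hcm] at h1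
    nlinarith [norm_nonneg (a ^ m)]
  · have h1 := key m hm
    have hsum : (0 : ℝ) ≤ ∑ k ∈ Finset.range K, ‖a ^ k‖ / c ^ k :=
      Finset.sum_nonneg fun k _ => by positivity
    nlinarith [pow_pos hc0 m]

/-- **Exponential clustering:** if `E r = r`, `E† l = l`, `⟨l, r⟩ = 1` and the spectral
radius of `E − S` (with `S = r·l†`) is strictly less than `1`, then for every real `c`
with `spectralRadius (E − S) < c < 1` and all `F`, `F'`, there is `C ≥ 0` such that the
connected correlator at distance `n` is bounded by `C·c^{n−1}`. -/
theorem uMPS_exponential_clustering (M : ℕ) (E : Matrix (Fin M) (Fin M) ℂ) (l r : Fin M → ℂ)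
    (hr : E.mulVec r = r) (hl : Eᴴ.mulVec l = l)
    (hlr : dotProduct (star l) r = 1)
    (hspec : spectralRadius ℂ (E - Matrix.vecMulVec r (star l)) < 1)
    (c : ℝ)
    (hc1 : spectralRadius ℂ (E - Matrix.vecMulVec r (star l)) < ENNReal.ofReal c)
    (hc2 : c < 1)
    (F F' : Matrix (Fin M) (Fin M) ℂ) :
    ∃ C : ℝ, 0 ≤ C ∧ ∀ n : ℕ, 1 ≤ n →
      ‖dotProduct (star l) ((F * E ^ (n - 1) * F').mulVec r) -
          dotProduct (star l) (F.mulVec r) *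
            dotProduct (star l) (F'.mulVec r)‖
        ≤ C * c ^ (n - 1) := by
  classical
  letI : NormedRing (Matrix (Fin M) (Fin M) ℂ) := Matrix.linftyOpNormedRing
  letI : NormedAlgebra ℂ (Matrix (Fin M) (Fin M) ℂ) := Matrix.linftyOpNormedAlgebra
  haveI : CompleteSpace (Matrix (Fin M) (Fin M) ℂ) := FiniteDimensional.complete ℂ _
  have hc0 : 0 < c := by
    by_contra h
    push_neg at h
    rw [ENNReal.ofReal_eq_zero.mpr h] at hc1
    exact (not_lt.mpr zero_le) hc1
  set S : Matrix (Fin M) (Fin M) ℂ := Matrix.vecMulVec r (star l) with hSdef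
  -- basic facts
  have hrE : ∀ i, (∑ k, E i k * r k) = r i := by
    intro i
    have := congrFun hr i
    simpa [Matrix.mulVec, dotProduct] using this
  have hlE : Matrix.vecMul (star l) E = star l := by
    have := congrArg star hl
    rwa [Matrix.star_mulVec, Matrix.conjTranspose_conjTranspose] at this
  have hlEj : ∀ j, (∑ k, star (l k) * E k j) = star (l j) := by
    intro j
    have := congrFun hlE j
    simpa [Matrix.vecMul, dotProduct] using this
  have hES : E * S = S := by
    ext i j
    simp only [Matrix.mul_apply, hSdef, Matrix.vecMulVec_apply, Pi.star_apply]
    calc (∑ k, E i k * (r k * star (l j))) = (∑ k, E i k * r k) * star (l j) := by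
          rw [Finset.sum_mul]; exact Finset.sum_congr rfl fun k _ => by ring
      _ = r i * star (l j) := by rw [hrE]
  have hSE : S * E = S := by
    ext i j
    simp only [Matrix.mul_apply, hSdef, Matrix.vecMulVec_apply, Pi.star_apply]
    calc (∑ k, r i * star (l k) * E k j) = r i * ∑ k, star (l k) * E k j := by
          rw [Finset.mul_sum]; exact Finset.sum_congr rfl fun k _ => by ring
      _ = r i * star (l j) := by rw [hlEj]
  have hSS : S * S = S := by
    ext i j
    simp only [Matrix.mul_apply, hSdef, Matrix.vecMulVec_apply, Pi.star_apply]
    have h1 : (∑ k, star (l k) * r k) = 1 := by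
      simpa [dotProduct] using hlr
    calc (∑ k, r i * star (l k) * (r k * star (l j)))
        = (r i * star (l j)) * ∑ k, star (l k) * r k := by
          rw [Finset.mul_sum]; exact Finset.sum_congr rfl fun k _ => by ring
      _ = r i * star (l j) := by rw [h1, mul_one]
  have hEpowS : ∀ m : ℕ, E ^ m * S = S := by
    intro m
    induction m with
    | zero => simp
    | succ m ih => rw [pow_succ, mul_assoc, hES, ih]
  have hApow : ∀ m : ℕ, 1 ≤ m → (E - S) ^ m = E ^ m - S := by
    intro m hm
    induction m with
    | zero => omega
    | succ m ih =>
      rcases Nat.eq_zero_or_pos m with h0 | h1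
      · subst h0; simp
      · rw [pow_succ, ih h1, sub_mul, mul_sub, mul_sub, hEpowS m, hSE, hSS, ← pow_succ]
        abel
  -- S acting on vectors
  have hS_mulVec : ∀ v : Fin M → ℂ, S.mulVec v = (dotProduct (star l) v) • r := by
    intro v
    ext i
    simp only [Matrix.mulVec, dotProduct, hSdef, Matrix.vecMulVec_apply, Pi.star_apply,
      Pi.smul_apply, smul_eq_mul]
    rw [Finset.sum_mul]
    exact Finset.sum_congr rfl fun j _ => by ring
  -- the connected correlator identity
  have hcorr : ∀ m : ℕ,
      dotProduct (star l) ((F * E ^ m * F').mulVec r) -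
        dotProduct (star l) (F.mulVec r) * dotProduct (star l) (F'.mulVec r) =
      dotProduct (star l) ((F * (E ^ m - S) * F').mulVec r) := by
    intro m
    have expand : F * (E ^ m - S) * F' = F * E ^ m * F' - F * S * F' := by
      rw [mul_sub, sub_mul]
    rw [expand, Matrix.sub_mulVec, dotProduct_sub]
    congr 1
    rw [mul_assoc, ← Matrix.mulVec_mulVec, ← Matrix.mulVec_mulVec, hS_mulVec,
      Matrix.mulVec_smul, dotProduct_smul, smul_eq_mul, mul_comm]
  -- dot product bound
  set K : ℝ := ∑ i, ‖l i‖ with hKdef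
  have hK0 : 0 ≤ K := Finset.sum_nonneg fun i _ => norm_nonneg _
  have hdot : ∀ v : Fin M → ℂ, ‖dotProduct (star l) v‖ ≤ K * ‖v‖ := by
    intro v
    simp only [dotProduct, Pi.star_apply]
    calc ‖∑ i, star (l i) * v i‖ ≤ ∑ i, ‖star (l i) * v i‖ := norm_sum_le _ _
      _ ≤ ∑ i, ‖l i‖ * ‖v‖ := Finset.sum_le_sum fun i _ => by
          rw [norm_mul, norm_star]
          exact mul_le_mul_of_nonneg_left (norm_le_pi_norm v i) (norm_nonneg _)
      _ = K * ‖v‖ := by rw [hKdef, Finset.sum_mul]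
  -- spectral radius bound
  obtain ⟨C₀, hC₀0, hC₀⟩ := exists_pow_norm_le_of_spectralRadius_lt (E - S) hc1
  set C₁ : ℝ := max C₀ ‖(1 : Matrix (Fin M) (Fin M) ℂ) - S‖ with hC₁def
  have hC₁0 : 0 ≤ C₁ := le_trans hC₀0 (le_max_left _ _)
  have hEm : ∀ m : ℕ, ‖E ^ m - S‖ ≤ C₁ * c ^ m := by
    intro m
    rcases Nat.eq_zero_or_pos m with h0 | h1
    · subst h0
      rw [pow_zero, pow_zero, mul_one]
      exact le_max_right _ _
    · rw [← hApow m h1]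
      exact (hC₀ m).trans
        (mul_le_mul_of_nonneg_right (le_max_left _ _) (pow_nonneg hc0.le m))
  -- conclude
  refine ⟨K * (‖F‖ * C₁ * ‖F'‖ * ‖r‖), by positivity, fun n hn => ?_⟩
  set m := n - 1 with hm
  rw [hcorr m]
  have hmat : ‖F * (E ^ m - S) * F'‖ ≤ ‖F‖ * (C₁ * c ^ m) * ‖F'‖ := by
    calc ‖F * (E ^ m - S) * F'‖ ≤ ‖F * (E ^ m - S)‖ * ‖F'‖ := norm_mul_le _ _
      _ ≤ ‖F‖ * ‖E ^ m - S‖ * ‖F'‖ := by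
          gcongr
          exact norm_mul_le _ _
      _ ≤ ‖F‖ * (C₁ * c ^ m) * ‖F'‖ := by
          gcongr
          exact hEm m
  calc ‖dotProduct (star l) ((F * (E ^ m - S) * F').mulVec r)‖
      ≤ K * ‖(F * (E ^ m - S) * F').mulVec r‖ := hdot _
    _ ≤ K * (‖F * (E ^ m - S) * F'‖ * ‖r‖) := by
        gcongr
        exact Matrix.linfty_opNorm_mulVec _ _
    _ ≤ K * ((‖F‖ * (C₁ * c ^ m) * ‖F'‖) * ‖r‖) := by
        have := mul_le_mul_of_nonneg_right hmat (norm_nonneg r)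
        exact mul_le_mul_of_nonneg_left this hK0
    _ = K * (‖F‖ * C₁ * ‖F'‖ * ‖r‖) * c ^ m := by ring
end
end

section
/- The fidelity per site between two uniform matrix product states is at most one: for any q-tuple A of complex D×D matrices and any q-tuple B of complex D'×D' matrices, the spectral radii of the transfer matrices satisfy spectralRadius(Σ_s A^s ⊗ conj(B^s))² ≤ spectralRadius(Σ_s A^s ⊗ conj(A^s)) · spectralRadius(Σ_s B^s ⊗ conj(B^s)). -/
/-!
STATEMENT 19: The fidelity per site between two uniform matrix product states is at most
one.
-/

open Matrix Kronecker Filter Topology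
open scoped ENNReal NNReal ComplexConjugate

noncomputable section

attribute [local instance] Matrix.linftyOpNormedRing Matrix.linftyOpNormedAlgebra

set_option maxHeartbeats 1000000
set_option synthInstance.maxHeartbeats 1000000

/-- The product of the matrices along a word. -/
def wp {q D : ℕ} (A : Fin q → Matrix (Fin D) (Fin D) ℂ) {n : ℕ} (w : Fin n → Fin q) :
    Matrix (Fin D) (Fin D) ℂ := (List.ofFn fun i => A (w i)).prod

variable {q D D' : ℕ}

lemma wp_cons (A : Fin q → Matrix (Fin D) (Fin D) ℂ) {n : ℕ} (s : Fin q) (w : Fin n → Fin q) :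
    wp A (Fin.cons s w) = A s * wp A w := by
  simp [wp, List.ofFn_succ]

lemma pow_eq_sum_words (A : Fin q → Matrix (Fin D) (Fin D) ℂ)
    (B : Fin q → Matrix (Fin D') (Fin D') ℂ) (n : ℕ) :
    (∑ s : Fin q, A s ⊗ₖ (B s).map (starRingEnd ℂ)) ^ n
      = ∑ w : Fin n → Fin q, wp A w ⊗ₖ (wp B w).map (starRingEnd ℂ) := by
  induction n with
  | zero => simp [wp, Matrix.one_kronecker_one]
  | succ n ih =>
      rw [pow_succ', ih, Finset.mul_sum]
      rw [← ((Fin.consEquiv fun _ => Fin q).sum_comp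
        (fun w => wp A w ⊗ₖ (wp B w).map (starRingEnd ℂ)))]
      rw [Fintype.sum_prod_type, Finset.sum_comm]
      refine Finset.sum_congr rfl fun w _ => ?_
      rw [Finset.sum_mul]
      refine Finset.sum_congr rfl fun s _ => ?_
      show _ = wp A (Fin.cons s w) ⊗ₖ ((wp B (Fin.cons s w)).map (starRingEnd ℂ))
      rw [wp_cons, wp_cons, Matrix.map_mul, ← Matrix.mul_kronecker_mul]

lemma nnnorm_complex_coe (r : ℝ≥0) : ‖((r:ℝ):ℂ)‖₊ = r := by
  ext
  simp [abs_of_nonneg r.coe_nonneg]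

lemma sum_mul_conj_nnnorm {ι : Type*} [Fintype ι] (c : ι → ℂ) :
    ‖∑ w : ι, c w * conj (c w)‖₊ = ∑ w : ι, ‖c w‖₊ ^ 2 := by
  have h : ∑ w : ι, c w * conj (c w) = (((∑ w : ι, ‖c w‖₊ ^ 2 : ℝ≥0) : ℝ) : ℂ) := by
    push_cast
    refine Finset.sum_congr rfl fun w _ => ?_
    rw [Complex.mul_conj]
    norm_cast
    simp [Complex.normSq_eq_norm_sq]
  rw [h, nnnorm_complex_coe]

lemma cauchy_schwarz_sum {ι : Type*} [Fintype ι] (a b : ι → ℂ) :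
    ‖∑ w : ι, a w * conj (b w)‖₊ ^ 2
      ≤ (∑ w : ι, ‖a w‖₊ ^ 2) * (∑ w : ι, ‖b w‖₊ ^ 2) := by
  let a' : EuclideanSpace ℂ ι := WithLp.toLp 2 a
  let b' : EuclideanSpace ℂ ι := WithLp.toLp 2 b
  have h1 : ∑ w : ι, a w * conj (b w) = inner ℂ b' a' := by
    rw [PiLp.inner_apply]
    exact Finset.sum_congr rfl fun w _ => by simp [a', b', RCLike.inner_apply, mul_comm]
  have h2 : ‖a'‖₊ ^ 2 = ∑ w : ι, ‖a w‖₊ ^ 2 := by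
    rw [EuclideanSpace.nnnorm_eq, NNReal.sq_sqrt]
  have h3 : ‖b'‖₊ ^ 2 = ∑ w : ι, ‖b w‖₊ ^ 2 := by
    rw [EuclideanSpace.nnnorm_eq, NNReal.sq_sqrt]
  calc ‖∑ w : ι, a w * conj (b w)‖₊ ^ 2 = ‖(inner ℂ b' a' : ℂ)‖₊ ^ 2 := by rw [h1]
    _ ≤ (‖b'‖₊ * ‖a'‖₊) ^ 2 := by
        gcongr
        exact nnnorm_inner_le_nnnorm _ _
    _ = (∑ w : ι, ‖a w‖₊ ^ 2) * (∑ w : ι, ‖b w‖₊ ^ 2) := by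
        rw [mul_pow, h2, h3, mul_comm]

lemma entry_nnnorm_le {ι : Type*} [Fintype ι] [DecidableEq ι] (M : Matrix ι ι ℂ) (i j : ι) :
    ‖M i j‖₊ ≤ ‖M‖₊ := by
  rw [Matrix.linfty_opNNNorm_def]
  exact le_trans (Finset.single_le_sum (f := fun j => ‖M i j‖₊) (fun _ _ => zero_le)
    (Finset.mem_univ j)) (Finset.le_sup (f := fun i => ∑ j, ‖M i j‖₊) (Finset.mem_univ i))

lemma entry_sq_le (A : Fin q → Matrix (Fin D) (Fin D) ℂ)
    (B : Fin q → Matrix (Fin D') (Fin D') ℂ) (n : ℕ) (p r : Fin D × Fin D') :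
    ‖((∑ s : Fin q, A s ⊗ₖ (B s).map (starRingEnd ℂ)) ^ n) p r‖₊ ^ 2
      ≤ ‖(∑ s : Fin q, A s ⊗ₖ (A s).map (starRingEnd ℂ)) ^ n‖₊ *
        ‖(∑ s : Fin q, B s ⊗ₖ (B s).map (starRingEnd ℂ)) ^ n‖₊ := by
  have hAB := pow_eq_sum_words A B n
  have hAA := pow_eq_sum_words A A n
  have hBB := pow_eq_sum_words B B n
  have eAB : ((∑ s : Fin q, A s ⊗ₖ (B s).map (starRingEnd ℂ)) ^ n) p r
      = ∑ w : Fin n → Fin q, wp A w p.1 r.1 * conj (wp B w p.2 r.2) := by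
    rw [hAB]
    simp [Matrix.sum_apply, Matrix.kroneckerMap_apply, Matrix.map_apply]
  have eAA : ‖((∑ s : Fin q, A s ⊗ₖ (A s).map (starRingEnd ℂ)) ^ n) (p.1, p.1) (r.1, r.1)‖₊
      = ∑ w : Fin n → Fin q, ‖wp A w p.1 r.1‖₊ ^ 2 := by
    rw [hAA]
    have : ((∑ w : Fin n → Fin q, wp A w ⊗ₖ (wp A w).map (starRingEnd ℂ))) (p.1, p.1) (r.1, r.1)
        = ∑ w : Fin n → Fin q, wp A w p.1 r.1 * conj (wp A w p.1 r.1) := by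
      simp [Matrix.sum_apply, Matrix.kroneckerMap_apply, Matrix.map_apply]
    rw [this, sum_mul_conj_nnnorm]
  have eBB : ‖((∑ s : Fin q, B s ⊗ₖ (B s).map (starRingEnd ℂ)) ^ n) (p.2, p.2) (r.2, r.2)‖₊
      = ∑ w : Fin n → Fin q, ‖wp B w p.2 r.2‖₊ ^ 2 := by
    rw [hBB]
    have : ((∑ w : Fin n → Fin q, wp B w ⊗ₖ (wp B w).map (starRingEnd ℂ))) (p.2, p.2) (r.2, r.2)
        = ∑ w : Fin n → Fin q, wp B w p.2 r.2 * conj (wp B w p.2 r.2) := by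
      simp [Matrix.sum_apply, Matrix.kroneckerMap_apply, Matrix.map_apply]
    rw [this, sum_mul_conj_nnnorm]
  calc ‖((∑ s : Fin q, A s ⊗ₖ (B s).map (starRingEnd ℂ)) ^ n) p r‖₊ ^ 2
      = ‖∑ w : Fin n → Fin q, wp A w p.1 r.1 * conj (wp B w p.2 r.2)‖₊ ^ 2 := by rw [eAB]
    _ ≤ (∑ w : Fin n → Fin q, ‖wp A w p.1 r.1‖₊ ^ 2) *
        (∑ w : Fin n → Fin q, ‖wp B w p.2 r.2‖₊ ^ 2) := cauchy_schwarz_sum _ _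
    _ ≤ ‖(∑ s : Fin q, A s ⊗ₖ (A s).map (starRingEnd ℂ)) ^ n‖₊ *
        ‖(∑ s : Fin q, B s ⊗ₖ (B s).map (starRingEnd ℂ)) ^ n‖₊ := by
        rw [← eAA, ← eBB]
        exact mul_le_mul' (entry_nnnorm_le _ _ _) (entry_nnnorm_le _ _ _)

/-- the key norm bound -/
lemma key (A : Fin q → Matrix (Fin D) (Fin D) ℂ)
    (B : Fin q → Matrix (Fin D') (Fin D') ℂ) (n : ℕ) :
    ‖(∑ s : Fin q, A s ⊗ₖ (B s).map (starRingEnd ℂ)) ^ n‖₊ ^ 2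
      ≤ ((D * D' + 1 : ℝ≥0)) ^ 2 *
        (‖(∑ s : Fin q, A s ⊗ₖ (A s).map (starRingEnd ℂ)) ^ n‖₊ *
         ‖(∑ s : Fin q, B s ⊗ₖ (B s).map (starRingEnd ℂ)) ^ n‖₊) := by
  set x := ‖(∑ s : Fin q, A s ⊗ₖ (A s).map (starRingEnd ℂ)) ^ n‖₊ with hx
  set y := ‖(∑ s : Fin q, B s ⊗ₖ (B s).map (starRingEnd ℂ)) ^ n‖₊ with hy
  have h1 : ‖(∑ s : Fin q, A s ⊗ₖ (B s).map (starRingEnd ℂ)) ^ n‖₊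
      ≤ (D * D' + 1 : ℝ≥0) * NNReal.sqrt (x * y) := by
    rw [Matrix.linfty_opNNNorm_def]
    refine Finset.sup_le fun p _ => ?_
    calc ∑ r, ‖((∑ s : Fin q, A s ⊗ₖ (B s).map (starRingEnd ℂ)) ^ n) p r‖₊
        ≤ ∑ _r : Fin D × Fin D', NNReal.sqrt (x * y) := by
          refine Finset.sum_le_sum fun r _ => ?_
          rw [NNReal.le_sqrt_iff_sq_le]
          exact entry_sq_le A B n p r
      _ = (Fintype.card (Fin D × Fin D') : ℝ≥0) * NNReal.sqrt (x * y) := by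
          rw [Finset.sum_const, Finset.card_univ, nsmul_eq_mul]
      _ ≤ (D * D' + 1 : ℝ≥0) * NNReal.sqrt (x * y) := by
          gcongr
          simp only [Fintype.card_prod, Fintype.card_fin]
          push_cast
          exact le_of_lt (lt_add_one _)
  calc ‖(∑ s : Fin q, A s ⊗ₖ (B s).map (starRingEnd ℂ)) ^ n‖₊ ^ 2
      ≤ ((D * D' + 1 : ℝ≥0) * NNReal.sqrt (x * y)) ^ 2 := by gcongr
    _ = (D * D' + 1 : ℝ≥0) ^ 2 * (x * y) := by rw [mul_pow, NNReal.sq_sqrt]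

/-- spectral radius of a complex matrix is finite -/
lemma rho_ne_top {ι : Type*} [Fintype ι] [DecidableEq ι] (M : Matrix ι ι ℂ) :
    spectralRadius ℂ M ≠ ∞ := by
  have h := spectrum.pow_nnnorm_pow_one_div_tendsto_nhds_spectralRadius M
  have hle : spectralRadius ℂ M ≤ (‖M‖₊ : ℝ≥0∞) := by
    refine le_of_tendsto h ?_
    filter_upwards [eventually_ge_atTop 1] with n hn
    have h1 : (‖M ^ n‖₊ : ℝ≥0∞) ≤ ((‖M‖₊ : ℝ≥0∞) ^ n) := by
      exact_mod_cast nnnorm_pow_le' M hn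
    calc (‖M ^ n‖₊ : ℝ≥0∞) ^ (1 / (n:ℝ)) ≤ ((‖M‖₊ : ℝ≥0∞) ^ n) ^ (1 / (n:ℝ)) :=
          ENNReal.rpow_le_rpow h1 (by positivity)
      _ = (‖M‖₊ : ℝ≥0∞) ^ ((n : ℝ) * (1 / (n:ℝ))) := by
          rw [← ENNReal.rpow_natCast, ← ENNReal.rpow_mul]
      _ = (‖M‖₊ : ℝ≥0∞) := by
          have hn0 : (n:ℝ) ≠ 0 := by
            have h' : n ≠ 0 := Nat.one_le_iff_ne_zero.mp hn
            exact_mod_cast h'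
          rw [mul_one_div_cancel hn0, ENNReal.rpow_one]
  exact ne_top_of_le_ne_top ENNReal.coe_ne_top hle

/-- `c ^ (1/n) → 1` for a constant `1 ≤ c < ∞`. -/
lemma tendsto_rpow_one_div_const {c : ℝ≥0} (hc : 1 ≤ c) :
    Tendsto (fun n : ℕ => ((c : ℝ≥0∞)) ^ (1 / (n:ℝ))) atTop (𝓝 1) := by
  have hone : ∀ n : ℕ, (1 : ℝ≥0∞) ≤ (c : ℝ≥0∞) ^ (1 / (n:ℝ)) := by
    intro n
    calc (1:ℝ≥0∞) = (1:ℝ≥0∞) ^ (1 / (n:ℝ)) := (ENNReal.one_rpow _).symm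
      _ ≤ (c : ℝ≥0∞) ^ (1 / (n:ℝ)) :=
          ENNReal.rpow_le_rpow (by exact_mod_cast hc) (by positivity)
  rw [tendsto_order]
  constructor
  · intro a ha
    exact Eventually.of_forall fun n => lt_of_lt_of_le ha (hone n)
  · intro b hb
    obtain ⟨y, h1y, hyb⟩ := exists_between hb
    filter_upwards [ENNReal.eventually_pow_one_div_le (ENNReal.coe_ne_top (r := c)) h1y]
      with n hn
    exact lt_of_le_of_lt hn hyb

/-- **The fidelity per site between two uniform MPS is at most one:** the spectral radii
of the transfer matrices satisfy
`ρ(Σ_s A^s ⊗ conj(B^s))² ≤ ρ(Σ_s A^s ⊗ conj(A^s)) · ρ(Σ_s B^s ⊗ conj(B^s))`. -/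
theorem uMPS_fidelity_per_site_le_one (D D' q : ℕ)
    (A : Fin q → Matrix (Fin D) (Fin D) ℂ) (B : Fin q → Matrix (Fin D') (Fin D') ℂ) :
    spectralRadius ℂ (∑ s : Fin q, A s ⊗ₖ (B s).map (starRingEnd ℂ)) ^ 2
      ≤ spectralRadius ℂ (∑ s : Fin q, A s ⊗ₖ (A s).map (starRingEnd ℂ)) *
        spectralRadius ℂ (∑ s : Fin q, B s ⊗ₖ (B s).map (starRingEnd ℂ)) := by
  set EAB := ∑ s : Fin q, A s ⊗ₖ (B s).map (starRingEnd ℂ) with hEAB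
  set EAA := ∑ s : Fin q, A s ⊗ₖ (A s).map (starRingEnd ℂ) with hEAA
  set EBB := ∑ s : Fin q, B s ⊗ₖ (B s).map (starRingEnd ℂ) with hEBB
  have hAB := spectrum.pow_nnnorm_pow_one_div_tendsto_nhds_spectralRadius EAB
  have hAA := spectrum.pow_nnnorm_pow_one_div_tendsto_nhds_spectralRadius EAA
  have hBB := spectrum.pow_nnnorm_pow_one_div_tendsto_nhds_spectralRadius EBB
  set c : ℝ≥0 := (D * D' + 1 : ℝ≥0) ^ 2 with hc
  have hc1 : (1:ℝ≥0) ≤ c := by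
    rw [hc]
    exact one_le_pow_of_one_le' (le_add_self) 2
  -- limit of the left side
  have hL : Tendsto (fun n : ℕ => ((‖EAB ^ n‖₊ : ℝ≥0∞) ^ (1 / (n:ℝ))) ^ 2) atTop
      (𝓝 (spectralRadius ℂ EAB ^ 2)) :=
    ((ENNReal.continuous_pow 2).tendsto _).comp hAB
  -- limit of the right side
  have hmul1 : Tendsto (fun n : ℕ => (‖EAA ^ n‖₊ : ℝ≥0∞) ^ (1 / (n:ℝ)) *
      (‖EBB ^ n‖₊ : ℝ≥0∞) ^ (1 / (n:ℝ))) atTop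
      (𝓝 (spectralRadius ℂ EAA * spectralRadius ℂ EBB)) :=
    ENNReal.Tendsto.mul hAA (Or.inr (rho_ne_top EBB)) hBB (Or.inr (rho_ne_top EAA))
  have hR : Tendsto (fun n : ℕ => ((c : ℝ≥0∞)) ^ (1 / (n:ℝ)) *
      ((‖EAA ^ n‖₊ : ℝ≥0∞) ^ (1 / (n:ℝ)) * (‖EBB ^ n‖₊ : ℝ≥0∞) ^ (1 / (n:ℝ)))) atTop
      (𝓝 (spectralRadius ℂ EAA * spectralRadius ℂ EBB)) := by
    have := ENNReal.Tendsto.mul (tendsto_rpow_one_div_const hc1) (Or.inl one_ne_zero)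
      hmul1 (Or.inr ENNReal.one_ne_top)
    simpa using this
  refine le_of_tendsto_of_tendsto' hL hR fun n => ?_
  -- pointwise inequality
  have hkey : (‖EAB ^ n‖₊ ^ 2 : ℝ≥0) ≤ c * (‖EAA ^ n‖₊ * ‖EBB ^ n‖₊) := key A B n
  have hnn : (0:ℝ) ≤ 1 / (n:ℝ) := by positivity
  calc ((‖EAB ^ n‖₊ : ℝ≥0∞) ^ (1 / (n:ℝ))) ^ 2
      = ((‖EAB ^ n‖₊ ^ 2 : ℝ≥0) : ℝ≥0∞) ^ (1 / (n:ℝ)) := by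
        rw [← ENNReal.rpow_natCast (((‖EAB ^ n‖₊ : ℝ≥0∞)) ^ (1 / (n:ℝ))) 2,
          ← ENNReal.rpow_mul, mul_comm, ENNReal.rpow_mul, ENNReal.rpow_natCast]
        norm_cast
    _ ≤ ((c * (‖EAA ^ n‖₊ * ‖EBB ^ n‖₊) : ℝ≥0) : ℝ≥0∞) ^ (1 / (n:ℝ)) :=
        ENNReal.rpow_le_rpow (by exact_mod_cast hkey) hnn
    _ = ((c : ℝ≥0∞)) ^ (1 / (n:ℝ)) *
        ((‖EAA ^ n‖₊ : ℝ≥0∞) ^ (1 / (n:ℝ)) * (‖EBB ^ n‖₊ : ℝ≥0∞) ^ (1 / (n:ℝ))) := by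
        push_cast
        rw [ENNReal.mul_rpow_of_nonneg _ _ hnn, ENNReal.mul_rpow_of_nonneg _ _ hnn]
end
end
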